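/- arXiv:0903.2634 — 4 statements merged into one kernel-verified Lean document; each statement's English description precedes it below -/
import Mathlib

section
/- There exist ε₀ > 0, ε₁ > 0 and n₀ ∈ ℕ such that for all n ≥ n₀, every deletion profile T, every m > 0 satisfying condition (vol2), and every N ∈ ℕ with N ≤ e^{n^{ε₀}}: E[Vol_{(ℝ^n)^N}(K_{T,m}^N ∩ F)] ≤ (1 + e^{-n^{ε₁}})·(E[Vol(K_{T,m})])^N, where Vol_{(ℝ^n)^N} denotes Lebesgue measure on (ℝ^n)^N and K^N is the N-fold Cartesian product of K. (Lemma 2(iii).) -/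
open MeasureTheory Real
open scoped ENNReal

noncomputable section

/-- `ℝ^n` with the Euclidean structure. -/
abbrev Euc (n : ℕ) := EuclideanSpace ℝ (Fin n)

/-- `D_n`, the closed unit Euclidean ball in `ℝ^n` centered at the origin. -/
def Dball (n : ℕ) : Set (Euc n) := Metric.closedBall 0 1

/-- `S^{n-1}`, the unit sphere in `ℝ^n`. -/
abbrev Sph (n : ℕ) := Metric.sphere (0 : Euc n) 1

/-- `σ`, the rotation-invariant probability measure on the sphere `S^{n-1}`
(the normalized spherical measure). -/
def sphσ (n : ℕ) : Measure (Sph n) :=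
  ((volume : Measure (Euc n)).toSphere Set.univ)⁻¹ • (volume : Measure (Euc n)).toSphere

/-- The uniform probability measure on a set `K ⊆ ℝ^n`. -/
def uniformOn {n : ℕ} (K : Set (Euc n)) : Measure (Euc n) :=
  (volume K)⁻¹ • volume.restrict K

/-- A deletion profile: a map `T` assigning to each `θ ∈ S^{n-1}` a convex body `T(θ)` with
`T₀(θ) ⊆ T(θ) ⊆ D_n`, where `T₀(θ) = D_n ∩ {x : ⟨x,θ⟩ ≤ n^{-1/3}}`, such that
`{(x,θ) : x ∈ T(θ)}` is Borel. -/
structure DeletionProfile (n : ℕ) where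
  T : Sph n → Set (Euc n)
  isCompact : ∀ θ, IsCompact (T θ)
  convex : ∀ θ, Convex ℝ (T θ)
  interior_nonempty : ∀ θ, (interior (T θ)).Nonempty
  lower : ∀ θ : Sph n,
    Dball n ∩ {x | (inner ℝ x (θ : Euc n) : ℝ) ≤ (n : ℝ) ^ (-(1/3) : ℝ)} ⊆ T θ
  upper : ∀ θ, T θ ⊆ Dball n
  measurable : MeasurableSet {p : Euc n × Sph n | p.1 ∈ T p.2}

/-- `A(x) = {θ ∈ S^{n-1} : x ∉ T(θ)}`. -/
def Aset {n : ℕ} (T : DeletionProfile n) (x : Euc n) : Set (Sph n) := {θ | x ∉ T.T θ}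

/-- The body obtained from `D_n` by the deletions given by directions `θ₁, …, θ_k`:
`D_n ∩ ⋂_i T(θᵢ)`. -/
def Kbody {n : ℕ} (T : DeletionProfile n) {k : ℕ} (θ : Fin k → Sph n) : Set (Euc n) :=
  Dball n ∩ ⋂ i, T.T (θ i)

/-- The Poisson weight `P(ζ = k) = e^{-m} m^k / k!`. -/
def poissonWt (m : ℝ) (k : ℕ) : ℝ≥0∞ :=
  ENNReal.ofReal (Real.exp (-m) * m ^ k / (Nat.factorial k))

/-- The law of `k` i.i.d. directions, each with law `σ`. -/
def dirPi (n k : ℕ) : Measure (Fin k → Sph n) := Measure.pi fun _ => sphσ n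

/-- The probability that the random body `K_{T,m}` satisfies a property `Q`:
first a Poisson(`m`) number `ζ` of i.i.d. uniform directions `θ₁, …, θ_ζ` is generated,
and `K_{T,m} = D_n ∩ ⋂_{i≤ζ} T(θᵢ)`. -/
def bodyProb {n : ℕ} (T : DeletionProfile n) (m : ℝ) (Q : Set (Euc n) → Prop) : ℝ≥0∞ :=
  ∑' k : ℕ, poissonWt m k * dirPi n k {θ | Q (Kbody T θ)}

/-- The expectation `E[φ(K_{T,m})]` for `φ` a (`ℝ≥0∞`-valued) function of the random body. -/
def bodyLExp {n : ℕ} (T : DeletionProfile n) (m : ℝ) (φ : Set (Euc n) → ℝ≥0∞) : ℝ≥0∞ :=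
  ∑' k : ℕ, poissonWt m k * ∫⁻ θ, φ (Kbody T θ) ∂(dirPi n k)

/-- `f̃(x) = P(x ∈ K_{T,m})`. -/
def fTilde {n : ℕ} (T : DeletionProfile n) (m : ℝ) (x : Euc n) : ℝ≥0∞ :=
  bodyProb T m (fun K => x ∈ K)

/-- `P_{T,m}(A)`: the probability of `A ⊆ (D_n)^N` under the process that first generates the
random body `K = K_{T,m}` and then samples `N` i.i.d. points uniformly from `K`. -/
def sampleProb {n : ℕ} (T : DeletionProfile n) (m : ℝ) (N : ℕ)
    (A : Set (Fin N → Euc n)) : ℝ≥0∞ :=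
  ∑' k : ℕ, poissonWt m k *
    ∫⁻ θ, Measure.pi (fun _ : Fin N => uniformOn (Kbody T θ)) A ∂(dirPi n k)

/-- The event `F ⊆ (D_n)^N`: the set of `N`-tuples `p = (x₁,…,x_N)` of points of `D_n` such
that `σ(A(xᵢ) ∩ A(xⱼ)) < e^{-n^{0.1}}·σ(A(xⱼ))` for all `i ≠ j`. -/
def Fevent {n : ℕ} (T : DeletionProfile n) (N : ℕ) : Set (Fin N → Euc n) :=
  {p | (∀ i, p i ∈ Dball n) ∧ ∀ i j, i ≠ j →
    sphσ n (Aset T (p i) ∩ Aset T (p j)) <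
      ENNReal.ofReal (Real.exp (-(n : ℝ) ^ (0.1 : ℝ))) * sphσ n (Aset T (p j))}

/-- Condition (vol2): `P(θ ∈ K_{T,m}) ≥ e^{-n^{ε₀}}` for every `θ ∈ S^{n-1}`. -/
def vol2Cond {n : ℕ} (T : DeletionProfile n) (m : ℝ) (ε₀ : ℝ) : Prop :=
  ∀ θ : Sph n, ENNReal.ofReal (Real.exp (-(n : ℝ) ^ ε₀)) ≤ fTilde T m (θ : Euc n)

end

open Set MeasureTheory

lemma aux7_sphProb {n : ℕ} (hn : 1 ≤ n) : IsProbabilityMeasure (sphσ n) := by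
  have : Nontrivial (Euc n) :=
    Module.nontrivial_of_finrank_pos (R := ℝ)
      (by rw [finrank_euclideanSpace_fin]; exact hn)
  constructor
  rw [sphσ, Measure.smul_apply, smul_eq_mul,
    Measure.toSphere_apply_univ]
  have hdim : (Module.finrank ℝ (Euc n) : ℝ≥0∞) ≠ 0 := by
    rw [finrank_euclideanSpace_fin]
    exact_mod_cast Nat.one_le_iff_ne_zero.mp hn
  have hb0 : volume (Metric.ball (0 : Euc n) 1) ≠ 0 :=
    (Metric.measure_ball_pos _ _ one_pos).ne'
  have hbt : volume (Metric.ball (0 : Euc n) 1) ≠ ⊤ := measure_ball_lt_top.ne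
  refine ENNReal.inv_mul_cancel ?_ ?_
  · exact mul_ne_zero hdim hb0
  · exact ENNReal.mul_ne_top (ENNReal.natCast_ne_top _) hbt

lemma aux7_TsetC_meas {n : ℕ} (T : DeletionProfile n) :
    MeasurableSet {q : Euc n × Sph n | q.2 ∈ Aset T q.1} := by
  have h := T.measurable.compl
  have e : {q : Euc n × Sph n | q.2 ∈ Aset T q.1} = {p : Euc n × Sph n | p.1 ∈ T.T p.2}ᶜ := by
    ext q; simp [Aset]
  rw [e]; exact h

lemma aux7_Aset_meas {n : ℕ} (T : DeletionProfile n) (x : Euc n) :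
    MeasurableSet (Aset T x) := by
  have h := (aux7_TsetC_meas T)
  have : Aset T x = Prod.mk x ⁻¹' {q : Euc n × Sph n | q.2 ∈ Aset T q.1} := rfl
  rw [this]
  exact h.preimage measurable_prodMk_left

lemma aux7_meas_sA {n : ℕ} (hn : 1 ≤ n) (T : DeletionProfile n) :
    Measurable fun x : Euc n => sphσ n (Aset T x) := by
  haveI := aux7_sphProb hn
  exact measurable_measure_prodMk_left (aux7_TsetC_meas T)

lemma aux7_poisson_sum (m : ℝ) (hm : 0 < m) (r : ℝ) (h0 : 0 ≤ r) :
    ∑' k : ℕ, poissonWt m k * ENNReal.ofReal r ^ k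
      = ENNReal.ofReal (Real.exp (-(m * (1 - r)))) := by
  have hterm : ∀ k : ℕ, poissonWt m k * ENNReal.ofReal r ^ k
      = ENNReal.ofReal (Real.exp (-m) * ((m * r) ^ k / (Nat.factorial k))) := by
    intro k
    rw [poissonWt, ← ENNReal.ofReal_pow h0, ← ENNReal.ofReal_mul (by positivity)]
    congr 1
    rw [mul_pow]
    ring
  rw [tsum_congr hterm]
  have hsum : HasSum (fun k : ℕ => Real.exp (-m) * ((m * r) ^ k / (Nat.factorial k)))
      (Real.exp (-m) * Real.exp (m * r)) := by
    have h1 : HasSum (fun k : ℕ => (m * r) ^ k / (Nat.factorial k)) (Real.exp (m * r)) := by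
      rw [Real.exp_eq_exp_ℝ]
      exact NormedSpace.expSeries_div_hasSum_exp (m * r)
    exact h1.mul_left _
  rw [← ENNReal.ofReal_tsum_of_nonneg (fun k => by positivity) hsum.summable,
    hsum.tsum_eq, ← Real.exp_add]
  congr 1
  ring

lemma aux7_compl {n : ℕ} (hn : 1 ≤ n) {S : Set (Sph n)} (hS : MeasurableSet S) :
    sphσ n Sᶜ = ENNReal.ofReal (1 - (sphσ n S).toReal) := by
  haveI := aux7_sphProb hn
  rw [measure_compl hS (measure_ne_top _ _), measure_univ,
    ENNReal.ofReal_sub _ ENNReal.toReal_nonneg, ENNReal.ofReal_one,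
    ENNReal.ofReal_toReal (measure_ne_top _ _)]

lemma aux7_dirPi_allmem {n : ℕ} (hn : 1 ≤ n) (k : ℕ) {S : Set (Sph n)} (hS : MeasurableSet S) :
    dirPi n k {θ : Fin k → Sph n | ∀ j, θ j ∈ S} = sphσ n S ^ k := by
  haveI := aux7_sphProb hn
  have e : {θ : Fin k → Sph n | ∀ j, θ j ∈ S} = Set.pi Set.univ (fun _ => S) := by
    ext θ; simp [Set.mem_pi]
  rw [dirPi, e, Measure.pi_pi]
  simp

lemma aux7_dirPi_Kbody {n : ℕ} (hn : 1 ≤ n) (T : DeletionProfile n) (k : ℕ)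
    {N : ℕ} (p : Fin N → Euc n) (hp : ∀ i, p i ∈ Dball n) :
    dirPi n k {θ : Fin k → Sph n | ∀ i, p i ∈ Kbody T θ}
      = sphσ n ((⋃ i, Aset T (p i))ᶜ) ^ k := by
  have e : {θ : Fin k → Sph n | ∀ i, p i ∈ Kbody T θ}
      = {θ : Fin k → Sph n | ∀ j, θ j ∈ (⋃ i, Aset T (p i))ᶜ} := by
    ext θ
    simp only [Set.mem_setOf_eq, Kbody, Set.mem_inter_iff, Set.mem_iInter,
      Set.mem_compl_iff, Set.mem_iUnion, Aset, not_exists, Set.mem_setOf_eq, not_not]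
    constructor
    · intro h j i; exact (h i).2 j
    · intro h i; exact ⟨hp i, fun j => h j i⟩
  rw [e, aux7_dirPi_allmem hn k
    ((MeasurableSet.iUnion fun i => aux7_Aset_meas T (p i)).compl)]

lemma aux7_dirPi_point {n : ℕ} (hn : 1 ≤ n) (T : DeletionProfile n) (k : ℕ)
    (x : Euc n) :
    dirPi n k {θ : Fin k → Sph n | x ∈ Kbody T θ}
      = (Dball n).indicator (fun x => sphσ n ((Aset T x)ᶜ) ^ k) x := by
  by_cases hx : x ∈ Dball n
  · rw [Set.indicator_of_mem hx]
    have e : {θ : Fin k → Sph n | x ∈ Kbody T θ}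
        = {θ : Fin k → Sph n | ∀ i : Fin 1, (fun _ => x) i ∈ Kbody T θ} := by
      ext θ; simp
    rw [e, aux7_dirPi_Kbody hn T k _ (fun _ => hx)]
    congr 2
    ext θ; simp
  · rw [Set.indicator_of_notMem hx]
    have e : {θ : Fin k → Sph n | x ∈ Kbody T θ} = ∅ := by
      ext θ
      simp only [Set.mem_setOf_eq, Set.mem_empty_iff_false, iff_false, Kbody]
      intro h
      exact hx h.1
    rw [e]
    simp

lemma aux7_fTilde {n : ℕ} (hn : 1 ≤ n) (T : DeletionProfile n) (m : ℝ) (hm : 0 < m)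
    {x : Euc n} (hx : x ∈ Dball n) :
    fTilde T m x = ENNReal.ofReal (Real.exp (-(m * (sphσ n (Aset T x)).toReal))) := by
  haveI := aux7_sphProb hn
  have hA := aux7_Aset_meas T x
  have h1 : (sphσ n (Aset T x)).toReal ≤ 1 := by
    have := prob_le_one (μ := sphσ n) (s := Aset T x)
    exact ENNReal.toReal_le_of_le_ofReal one_pos.le (by simpa using this)
  rw [fTilde, bodyProb]
  have e : ∀ k : ℕ, dirPi n k {θ : Fin k → Sph n | x ∈ Kbody T θ}
      = ENNReal.ofReal (1 - (sphσ n (Aset T x)).toReal) ^ k := by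
    intro k
    rw [aux7_dirPi_point hn T k x, Set.indicator_of_mem hx, aux7_compl hn hA]
  calc ∑' k : ℕ, poissonWt m k * dirPi n k {θ : Fin k → Sph n | x ∈ Kbody T θ}
      = ∑' k : ℕ, poissonWt m k * ENNReal.ofReal (1 - (sphσ n (Aset T x)).toReal) ^ k := by
        exact tsum_congr fun k => by rw [e k]
    _ = ENNReal.ofReal (Real.exp (-(m * (1 - (1 - (sphσ n (Aset T x)).toReal))))) :=
        aux7_poisson_sum m hm _ (by linarith)
    _ = ENNReal.ofReal (Real.exp (-(m * (sphσ n (Aset T x)).toReal))) := by ring_nf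

lemma aux7_zero_mem {n : ℕ} (hn : 1 ≤ n) (T : DeletionProfile n) (θ : Sph n) :
    (0 : Euc n) ∈ T.T θ := by
  apply T.lower
  refine ⟨Metric.mem_closedBall_self zero_le_one, ?_⟩
  simp only [Set.mem_setOf_eq, inner_zero_left]
  positivity

lemma aux7_sA_bound {n : ℕ} (hn : 1 ≤ n) (T : DeletionProfile n) (m : ℝ) (hm : 0 < m)
    (ε₀ : ℝ) (hvol : vol2Cond T m ε₀) {x : Euc n} (hx : x ∈ Dball n) :
    m * (sphσ n (Aset T x)).toReal ≤ (n : ℝ) ^ ε₀ := by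
  haveI := aux7_sphProb hn
  by_cases hx0 : x = 0
  · have : Aset T x = ∅ := by
      ext θ
      simp only [Aset, Set.mem_setOf_eq, Set.mem_empty_iff_false, iff_false, not_not, hx0]
      exact aux7_zero_mem hn T θ
    rw [this]
    simp only [measure_empty, ENNReal.toReal_zero, mul_zero]
    positivity
  · have hxn : ‖x‖ ≠ 0 := norm_ne_zero_iff.mpr hx0
    have hx1 : ‖x‖ ≤ 1 := by
      rw [Dball, Metric.mem_closedBall, dist_zero_right] at hx
      exact hx
    set y : Euc n := ‖x‖⁻¹ • x with hy
    have hys : y ∈ Sph n := by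
      rw [mem_sphere_zero_iff_norm, hy, norm_smul, norm_inv, norm_norm,
        inv_mul_cancel₀ hxn]
    set θx : Sph n := ⟨y, hys⟩
    have hsub : Aset T x ⊆ Aset T (θx : Euc n) := by
      intro η hη
      simp only [Aset, Set.mem_setOf_eq] at hη ⊢
      intro hyT
      apply hη
      have h0T : (0 : Euc n) ∈ T.T η := aux7_zero_mem hn T η
      have hxeq : x = (1 - ‖x‖) • (0 : Euc n) + ‖x‖ • y := by
        rw [hy, smul_smul, mul_inv_cancel₀ hxn, smul_zero, zero_add, one_smul]
      rw [hxeq]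
      exact T.convex η h0T hyT (by linarith [norm_nonneg x]) (norm_nonneg x) (by ring)
    have hθD : (θx : Euc n) ∈ Dball n := by
      rw [Dball, Metric.mem_closedBall, dist_zero_right]
      rw [mem_sphere_zero_iff_norm] at hys
      exact le_of_eq hys
    have hft := hvol θx
    rw [aux7_fTilde hn T m hm hθD] at hft
    have hreal : Real.exp (-(n : ℝ) ^ ε₀)
        ≤ Real.exp (-(m * (sphσ n (Aset T (θx : Euc n))).toReal)) := by
      rw [← ENNReal.ofReal_le_ofReal_iff (Real.exp_pos _).le]
      exact hft
    have hθbd : m * (sphσ n (Aset T (θx : Euc n))).toReal ≤ (n : ℝ) ^ ε₀ := by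
      have := Real.exp_le_exp.mp hreal
      linarith
    have hmono : (sphσ n (Aset T x)).toReal ≤ (sphσ n (Aset T (θx : Euc n))).toReal :=
      ENNReal.toReal_mono (measure_ne_top _ _) (measure_mono hsub)
    nlinarith [hm.le]

open Finset in
lemma aux7_bonferroni {α : Type*} [MeasurableSpace α] (μ : Measure α) {N : ℕ}
    (A : Fin N → Set α) (hA : ∀ i, MeasurableSet (A i)) (s : Finset (Fin N)) :
    ∑ i ∈ s, μ (A i) ≤ μ (⋃ i ∈ s, A i) + ∑ i ∈ s, ∑ j ∈ s.erase i, μ (A i ∩ A j) := by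
  classical
  induction s using Finset.induction_on with
  | empty => simp
  | @insert a s ha ih =>
    have hUs : MeasurableSet (⋃ i ∈ s, A i) :=
      MeasurableSet.biUnion s.countable_toSet fun i _ => hA i
    have key : μ (A a) + μ (⋃ i ∈ s, A i)
        = μ (A a ∪ ⋃ i ∈ s, A i) + μ (A a ∩ ⋃ i ∈ s, A i) :=
      (measure_union_add_inter (A a) hUs).symm
    have hcap : μ (A a ∩ ⋃ i ∈ s, A i) ≤ ∑ j ∈ s, μ (A a ∩ A j) := by
      have : A a ∩ ⋃ i ∈ s, A i = ⋃ i ∈ s, A a ∩ A i := by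
        rw [Set.inter_iUnion₂]
      rw [this]
      exact measure_biUnion_finset_le s _
    have hpair : ∑ j ∈ s, μ (A a ∩ A j) + ∑ i ∈ s, ∑ j ∈ s.erase i, μ (A i ∩ A j)
        ≤ ∑ i ∈ insert a s, ∑ j ∈ (insert a s).erase i, μ (A i ∩ A j) := by
      rw [Finset.sum_insert ha, Finset.erase_insert ha]
      refine add_le_add_right (Finset.sum_le_sum fun i hi => ?_) _
      exact Finset.sum_le_sum_of_subset
        (Finset.erase_subset_erase i (Finset.subset_insert a s))
    calc ∑ i ∈ insert a s, μ (A i) = μ (A a) + ∑ i ∈ s, μ (A i) := Finset.sum_insert ha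
      _ ≤ μ (A a) + (μ (⋃ i ∈ s, A i) + ∑ i ∈ s, ∑ j ∈ s.erase i, μ (A i ∩ A j)) := by
          gcongr
      _ = (μ (A a) + μ (⋃ i ∈ s, A i)) + ∑ i ∈ s, ∑ j ∈ s.erase i, μ (A i ∩ A j) := by ring
      _ = (μ (A a ∪ ⋃ i ∈ s, A i) + μ (A a ∩ ⋃ i ∈ s, A i))
            + ∑ i ∈ s, ∑ j ∈ s.erase i, μ (A i ∩ A j) := by rw [key]
      _ ≤ μ (A a ∪ ⋃ i ∈ s, A i)
            + (∑ j ∈ s, μ (A a ∩ A j) + ∑ i ∈ s, ∑ j ∈ s.erase i, μ (A i ∩ A j)) := by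
          rw [add_assoc]
          gcongr
      _ ≤ μ (⋃ i ∈ insert a s, A i)
            + ∑ i ∈ insert a s, ∑ j ∈ (insert a s).erase i, μ (A i ∩ A j) := by
          gcongr
          · rw [Finset.set_biUnion_insert]

lemma aux7_lintegral_pi_prod {α : Type*} [MeasurableSpace α] (μ : Measure α) [SigmaFinite μ]
    (h : α → ℝ≥0∞) (hh : Measurable h) :
    ∀ N : ℕ, ∫⁻ p : Fin N → α, ∏ i, h (p i) ∂(Measure.pi fun _ => μ)
      = (∫⁻ x, h x ∂μ) ^ N := by
  intro N
  induction N with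
  | zero =>
    simp only [Finset.univ_eq_empty, Finset.prod_empty, pow_zero, lintegral_const, one_mul]
    rw [Measure.pi_univ]
    simp
  | succ N ih =>
    have hmp := MeasureTheory.measurePreserving_piFinSuccAbove
      (fun _ : Fin (N + 1) => μ) 0
    set e := MeasurableEquiv.piFinSuccAbove (fun _ : Fin (N + 1) => α) 0
    have hg : Measurable fun q : α × (Fin N → α) => h q.1 * ∏ j, h (q.2 j) :=
      (hh.comp measurable_fst).mul
        (Finset.measurable_prod _ fun j _ =>
          hh.comp ((measurable_pi_apply j).comp measurable_snd))
    have key : ∫⁻ p : Fin (N + 1) → α, ∏ i, h (p i) ∂(Measure.pi fun _ => μ)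
        = ∫⁻ q : α × (Fin N → α), h q.1 * ∏ j, h (q.2 j)
            ∂(μ.prod (Measure.pi fun _ : Fin N => μ)) := by
      rw [← hmp.lintegral_comp hg]
      apply lintegral_congr
      intro p
      simp only [e, MeasurableEquiv.piFinSuccAbove]
      rw [Fin.prod_univ_succAbove (fun i => h (p i)) 0]
      rfl
    rw [key, lintegral_prod_mul (f := h) (g := fun y : Fin N → α => ∏ j, h (y j))
      hh.aemeasurable
      ((Finset.measurable_prod _ fun j _ => hh.comp (measurable_pi_apply j)).aemeasurable),
      ih, pow_succ]
    ring

lemma aux7_meas_pair {n : ℕ} (hn : 1 ≤ n) (T : DeletionProfile n) :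
    Measurable fun y : Euc n × Euc n => sphσ n (Aset T y.1 ∩ Aset T y.2) := by
  haveI := aux7_sphProb hn
  have hs : MeasurableSet {q : (Euc n × Euc n) × Sph n |
      q.2 ∈ Aset T q.1.1 ∩ Aset T q.1.2} := by
    have h1 : MeasurableSet {q : (Euc n × Euc n) × Sph n | q.2 ∈ Aset T q.1.1} :=
      (aux7_TsetC_meas T).preimage
        ((measurable_fst.comp measurable_fst).prodMk measurable_snd)
    have h2 : MeasurableSet {q : (Euc n × Euc n) × Sph n | q.2 ∈ Aset T q.1.2} :=
      (aux7_TsetC_meas T).preimage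
        ((measurable_snd.comp measurable_fst).prodMk measurable_snd)
    exact h1.inter h2
  have := measurable_measure_prodMk_left (ν := sphσ n) hs
  simpa only [Set.preimage_setOf_eq, Set.setOf_mem_eq] using this

lemma aux7_meas_sU {n : ℕ} (hn : 1 ≤ n) (T : DeletionProfile n) (N : ℕ) :
    Measurable fun p : Fin N → Euc n => sphσ n (⋃ i, Aset T (p i)) := by
  haveI := aux7_sphProb hn
  have hs : MeasurableSet {q : (Fin N → Euc n) × Sph n |
      q.2 ∈ ⋃ i, Aset T (q.1 i)} := by
    have : {q : (Fin N → Euc n) × Sph n | q.2 ∈ ⋃ i, Aset T (q.1 i)}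
        = ⋃ i, {q : (Fin N → Euc n) × Sph n | q.2 ∈ Aset T (q.1 i)} := by
      ext q; simp
    rw [this]
    refine MeasurableSet.iUnion fun i => ?_
    have e2 : {q : (Fin N → Euc n) × Sph n | q.2 ∈ Aset T (q.1 i)}
        = (fun q : (Fin N → Euc n) × Sph n => (q.1 i, q.2)) ⁻¹'
          {q : Euc n × Sph n | q.2 ∈ Aset T q.1} := rfl
    rw [e2]
    exact (aux7_TsetC_meas T).preimage
      (((measurable_pi_apply i).comp measurable_fst).prodMk measurable_snd)
  have := measurable_measure_prodMk_left (ν := sphσ n) hs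
  simpa only [Set.preimage_setOf_eq, Set.setOf_mem_eq] using this

set_option maxHeartbeats 1000000 in
lemma aux7_Fevent_meas {n : ℕ} (hn : 1 ≤ n) (T : DeletionProfile n) (N : ℕ) :
    MeasurableSet (Fevent T N) := by
  haveI := aux7_sphProb hn
  have e : Fevent T N = (⋂ i, {p : Fin N → Euc n | p i ∈ Dball n}) ∩
      ⋂ i, ⋂ j, {p : Fin N → Euc n | i ≠ j →
        sphσ n (Aset T (p i) ∩ Aset T (p j)) <
          ENNReal.ofReal (Real.exp (-(n : ℝ) ^ (0.1 : ℝ))) * sphσ n (Aset T (p j))} := by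
    ext p
    simp only [Fevent, Set.mem_setOf_eq, Set.mem_inter_iff, Set.mem_iInter]
  rw [e]
  refine MeasurableSet.inter (MeasurableSet.iInter fun i => ?_)
    (MeasurableSet.iInter fun i => MeasurableSet.iInter fun j => ?_)
  · exact (Metric.isClosed_closedBall.measurableSet).preimage (measurable_pi_apply i)
  · by_cases hij : i = j
    · simp [hij]
    · have e2 : {p : Fin N → Euc n | i ≠ j →
          sphσ n (Aset T (p i) ∩ Aset T (p j)) <
            ENNReal.ofReal (Real.exp (-(n : ℝ) ^ (0.1 : ℝ))) * sphσ n (Aset T (p j))}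
          = {p : Fin N → Euc n |
          sphσ n (Aset T (p i) ∩ Aset T (p j)) <
            ENNReal.ofReal (Real.exp (-(n : ℝ) ^ (0.1 : ℝ))) * sphσ n (Aset T (p j))} := by
        ext p; simp [hij]
      rw [e2]
      have hf : Measurable fun p : Fin N → Euc n => (p i, p j) :=
        (measurable_pi_apply i).prodMk (measurable_pi_apply j)
      have hm1 : Measurable fun p : Fin N → Euc n =>
          sphσ n (Aset T (p i) ∩ Aset T (p j)) := (aux7_meas_pair hn T).comp hf
      have hm2 : Measurable fun p : Fin N → Euc n =>
          ENNReal.ofReal (Real.exp (-(n : ℝ) ^ (0.1 : ℝ))) * sphσ n (Aset T (p j)) :=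
        ((aux7_meas_sA hn T).comp (measurable_pi_apply j)).const_mul _
      exact measurableSet_lt hm1 hm2

lemma aux7_swap {n : ℕ} (hn : 1 ≤ n) (T : DeletionProfile n) (k : ℕ) {N : ℕ}
    {F : Set (Fin N → Euc n)} (hF : MeasurableSet F) :
    ∫⁻ θ, volume ({p : Fin N → Euc n | ∀ i, p i ∈ Kbody T θ} ∩ F) ∂(dirPi n k)
      = ∫⁻ p, F.indicator
          (fun p => dirPi n k {θ : Fin k → Sph n | ∀ i, p i ∈ Kbody T θ}) p := by
  haveI := aux7_sphProb hn
  haveI : IsProbabilityMeasure (dirPi n k) :=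
    (inferInstance : IsProbabilityMeasure (Measure.pi fun _ : Fin k => sphσ n))
  set W : Set ((Fin k → Sph n) × (Fin N → Euc n)) :=
    {q | ∀ i, q.2 i ∈ Kbody T q.1} ∩ {q | q.2 ∈ F} with hWdef
  have hW1 : MeasurableSet {q : (Fin k → Sph n) × (Fin N → Euc n) |
      ∀ i, q.2 i ∈ Kbody T q.1} := by
    have e : {q : (Fin k → Sph n) × (Fin N → Euc n) | ∀ i, q.2 i ∈ Kbody T q.1}
        = ⋂ i, ((fun q : (Fin k → Sph n) × (Fin N → Euc n) => q.2 i) ⁻¹' Dball n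
            ∩ ⋂ j, (fun q : (Fin k → Sph n) × (Fin N → Euc n) => (q.2 i, q.1 j)) ⁻¹'
                {r : Euc n × Sph n | r.1 ∈ T.T r.2}) := by
      ext q
      simp only [Set.mem_setOf_eq, Set.mem_iInter, Set.mem_inter_iff, Set.mem_preimage,
        Kbody, Set.mem_iInter, Set.mem_inter_iff]
    rw [e]
    have hev : ∀ i : Fin N, Measurable fun q : (Fin k → Sph n) × (Fin N → Euc n) => q.2 i :=
      fun i => measurable_snd.eval
    have hev2 : ∀ (i : Fin N) (j : Fin k),
        Measurable fun q : (Fin k → Sph n) × (Fin N → Euc n) => (q.2 i, q.1 j) :=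
      fun i j => (measurable_snd.eval).prodMk (measurable_fst.eval)
    exact MeasurableSet.iInter fun i => MeasurableSet.inter
      (Metric.isClosed_closedBall.measurableSet.preimage (hev i))
      (MeasurableSet.iInter fun j => T.measurable.preimage (hev2 i j))
  have hWm : MeasurableSet W := hW1.inter (hF.preimage measurable_snd)
  have h1 := Measure.prod_apply (μ := dirPi n k)
    (ν := (volume : Measure (Fin N → Euc n))) hWm
  have h2 := Measure.prod_apply_symm (μ := dirPi n k)
    (ν := (volume : Measure (Fin N → Euc n))) hWm
  have e1 : ∀ θ : Fin k → Sph n, Prod.mk θ ⁻¹' W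
      = {p : Fin N → Euc n | ∀ i, p i ∈ Kbody T θ} ∩ F := by
    intro θ; rfl
  calc ∫⁻ θ, volume ({p : Fin N → Euc n | ∀ i, p i ∈ Kbody T θ} ∩ F) ∂(dirPi n k)
      = ∫⁻ θ, volume (Prod.mk θ ⁻¹' W) ∂(dirPi n k) := by
        apply lintegral_congr; intro θ; rw [e1]
    _ = (dirPi n k).prod volume W := h1.symm
    _ = ∫⁻ p, dirPi n k ((fun θ : Fin k → Sph n => (θ, p)) ⁻¹' W) := h2
    _ = ∫⁻ p, F.indicator
          (fun p => dirPi n k {θ : Fin k → Sph n | ∀ i, p i ∈ Kbody T θ}) p := by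
        apply lintegral_congr; intro p
        by_cases hp : p ∈ F
        · rw [Set.indicator_of_mem hp]
          congr 1
          ext θ
          simp [hWdef, hp]
        · rw [Set.indicator_of_notMem hp]
          have e0 : (fun θ : Fin k → Sph n => (θ, p)) ⁻¹' W = ∅ := by
            ext θ; simp [hWdef, hp]
          rw [e0]
          simp

lemma aux7_wt_ne_top (m : ℝ) (k : ℕ) : poissonWt m k ≠ ⊤ := by
  rw [poissonWt]; exact ENNReal.ofReal_ne_top

lemma aux7_meas_g {n : ℕ} (hn : 1 ≤ n) (T : DeletionProfile n) (k : ℕ) :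
    Measurable fun x : Euc n =>
      ENNReal.ofReal (1 - (sphσ n (Aset T x)).toReal) ^ k :=
  ((Measurable.ennreal_ofReal
    (measurable_const.sub (aux7_meas_sA hn T).ennreal_toReal)).pow_const k)

lemma aux7_RHS_rep {n : ℕ} (hn : 1 ≤ n) (T : DeletionProfile n) (m : ℝ) (hm : 0 < m) :
    bodyLExp T m volume = ∫⁻ x, (Dball n).indicator
      (fun x => ENNReal.ofReal (Real.exp (-(m * (sphσ n (Aset T x)).toReal)))) x := by
  haveI := aux7_sphProb hn
  haveI : ∀ k : ℕ, IsProbabilityMeasure (dirPi n k) := fun k =>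
    (inferInstance : IsProbabilityMeasure (Measure.pi fun _ : Fin k => sphσ n))
  have hDm : MeasurableSet (Dball n) := Metric.isClosed_closedBall.measurableSet
  have swap1 : ∀ k : ℕ, ∫⁻ θ, volume (Kbody T θ) ∂(dirPi n k)
      = ∫⁻ x, dirPi n k {θ : Fin k → Sph n | x ∈ Kbody T θ} := by
    intro k
    set W : Set ((Fin k → Sph n) × Euc n) := {q | q.2 ∈ Kbody T q.1} with hWdef
    have hWm : MeasurableSet W := by
      have e : W = ((fun q : (Fin k → Sph n) × Euc n => q.2) ⁻¹' Dball n)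
          ∩ ⋂ j, (fun q : (Fin k → Sph n) × Euc n => (q.2, q.1 j)) ⁻¹'
              {r : Euc n × Sph n | r.1 ∈ T.T r.2} := by
        ext q
        simp only [hWdef, Set.mem_setOf_eq, Kbody, Set.mem_inter_iff, Set.mem_iInter,
          Set.mem_preimage]
      rw [e]
      exact (hDm.preimage measurable_snd).inter
        (MeasurableSet.iInter fun j =>
          T.measurable.preimage (measurable_snd.prodMk measurable_fst.eval))
    have h1 := Measure.prod_apply (μ := dirPi n k) (ν := (volume : Measure (Euc n))) hWm
    have h2 := Measure.prod_apply_symm (μ := dirPi n k) (ν := (volume : Measure (Euc n))) hWm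
    calc ∫⁻ θ, volume (Kbody T θ) ∂(dirPi n k)
        = ∫⁻ θ, volume (Prod.mk θ ⁻¹' W) ∂(dirPi n k) := rfl
      _ = (dirPi n k).prod volume W := h1.symm
      _ = ∫⁻ x, dirPi n k ((fun θ : Fin k → Sph n => (θ, x)) ⁻¹' W) := h2
      _ = ∫⁻ x, dirPi n k {θ : Fin k → Sph n | x ∈ Kbody T θ} := rfl
  calc bodyLExp T m volume
      = ∑' k : ℕ, poissonWt m k * ∫⁻ x, (Dball n).indicator
          (fun x => ENNReal.ofReal (1 - (sphσ n (Aset T x)).toReal) ^ k) x := by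
        rw [bodyLExp]
        refine tsum_congr fun k => ?_
        rw [swap1 k]
        congr 1
        apply lintegral_congr
        intro x
        rw [aux7_dirPi_point hn T k x]
        by_cases hx : x ∈ Dball n
        · rw [Set.indicator_of_mem hx, Set.indicator_of_mem hx,
            aux7_compl hn (aux7_Aset_meas T x)]
        · rw [Set.indicator_of_notMem hx, Set.indicator_of_notMem hx]
    _ = ∑' k : ℕ, ∫⁻ x, (Dball n).indicator
          (fun x => poissonWt m k * ENNReal.ofReal (1 - (sphσ n (Aset T x)).toReal) ^ k) x := by
        refine tsum_congr fun k => ?_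
        rw [← lintegral_const_mul' _ _ (aux7_wt_ne_top m k)]
        congr 1
        ext x
        by_cases hx : x ∈ Dball n
        · rw [Set.indicator_of_mem hx, Set.indicator_of_mem hx]
        · rw [Set.indicator_of_notMem hx, Set.indicator_of_notMem hx, mul_zero]
    _ = ∫⁻ x, ∑' k : ℕ, (Dball n).indicator
          (fun x => poissonWt m k * ENNReal.ofReal (1 - (sphσ n (Aset T x)).toReal) ^ k) x := by
        rw [lintegral_tsum]
        intro k
        exact (((aux7_meas_g hn T k).const_mul _).indicator hDm).aemeasurable
    _ = ∫⁻ x, (Dball n).indicator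
          (fun x => ENNReal.ofReal (Real.exp (-(m * (sphσ n (Aset T x)).toReal)))) x := by
        apply lintegral_congr
        intro x
        by_cases hx : x ∈ Dball n
        · simp only [Set.indicator_of_mem hx]
          have h1 : (sphσ n (Aset T x)).toReal ≤ 1 := by
            have := prob_le_one (μ := sphσ n) (s := Aset T x)
            exact ENNReal.toReal_le_of_le_ofReal one_pos.le (by simpa using this)
          rw [aux7_poisson_sum m hm _ (by linarith)]
          ring_nf
        · simp only [Set.indicator_of_notMem hx]
          simp

lemma aux7_meas_gU {n : ℕ} (hn : 1 ≤ n) (T : DeletionProfile n) (N k : ℕ) :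
    Measurable fun p : Fin N → Euc n =>
      ENNReal.ofReal (1 - (sphσ n (⋃ i, Aset T (p i))).toReal) ^ k :=
  ((Measurable.ennreal_ofReal
    (measurable_const.sub (aux7_meas_sU hn T N).ennreal_toReal)).pow_const k)

lemma aux7_LHS_rep {n : ℕ} (hn : 1 ≤ n) (T : DeletionProfile n) (m : ℝ) (hm : 0 < m)
    {N : ℕ} {F : Set (Fin N → Euc n)} (hF : MeasurableSet F)
    (hFD : ∀ p ∈ F, ∀ i, p i ∈ Dball n) :
    bodyLExp T m (fun K => volume ({p : Fin N → Euc n | ∀ i, p i ∈ K} ∩ F))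
      = ∫⁻ p, F.indicator (fun p =>
          ENNReal.ofReal (Real.exp (-(m * (sphσ n (⋃ i, Aset T (p i))).toReal)))) p := by
  haveI := aux7_sphProb hn
  have hUm : ∀ p : Fin N → Euc n, MeasurableSet (⋃ i, Aset T (p i)) :=
    fun p => MeasurableSet.iUnion fun i => aux7_Aset_meas T (p i)
  calc bodyLExp T m (fun K => volume ({p : Fin N → Euc n | ∀ i, p i ∈ K} ∩ F))
      = ∑' k : ℕ, poissonWt m k * ∫⁻ p, F.indicator (fun p =>
          ENNReal.ofReal (1 - (sphσ n (⋃ i, Aset T (p i))).toReal) ^ k) p := by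
        rw [bodyLExp]
        refine tsum_congr fun k => ?_
        rw [aux7_swap hn T k hF]
        congr 1
        apply lintegral_congr
        intro p
        by_cases hp : p ∈ F
        · rw [Set.indicator_of_mem hp, Set.indicator_of_mem hp,
            aux7_dirPi_Kbody hn T k p (hFD p hp), aux7_compl hn (hUm p)]
        · rw [Set.indicator_of_notMem hp, Set.indicator_of_notMem hp]
    _ = ∑' k : ℕ, ∫⁻ p, F.indicator (fun p =>
          poissonWt m k * ENNReal.ofReal (1 - (sphσ n (⋃ i, Aset T (p i))).toReal) ^ k) p := by
        refine tsum_congr fun k => ?_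
        rw [← lintegral_const_mul' _ _ (aux7_wt_ne_top m k)]
        congr 1
        ext p
        by_cases hp : p ∈ F
        · rw [Set.indicator_of_mem hp, Set.indicator_of_mem hp]
        · rw [Set.indicator_of_notMem hp, Set.indicator_of_notMem hp, mul_zero]
    _ = ∫⁻ p, ∑' k : ℕ, F.indicator (fun p =>
          poissonWt m k * ENNReal.ofReal (1 - (sphσ n (⋃ i, Aset T (p i))).toReal) ^ k) p := by
        rw [lintegral_tsum]
        intro k
        exact (((aux7_meas_gU hn T N k).const_mul _).indicator hF).aemeasurable
    _ = ∫⁻ p, F.indicator (fun p =>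
          ENNReal.ofReal (Real.exp (-(m * (sphσ n (⋃ i, Aset T (p i))).toReal)))) p := by
        apply lintegral_congr
        intro p
        by_cases hp : p ∈ F
        · simp only [Set.indicator_of_mem hp]
          have h1 : (sphσ n (⋃ i, Aset T (p i))).toReal ≤ 1 := by
            have := prob_le_one (μ := sphσ n) (s := ⋃ i, Aset T (p i))
            exact ENNReal.toReal_le_of_le_ofReal one_pos.le (by simpa using this)
          rw [aux7_poisson_sum m hm _ (by linarith)]
          ring_nf
        · simp only [Set.indicator_of_notMem hp]
          simp

lemma aux7_pointwise {n : ℕ} (hn : 1 ≤ n) (T : DeletionProfile n) (m : ℝ) (hm : 0 < m)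
    (ε₀ : ℝ) (hvol : vol2Cond T m ε₀) {N : ℕ} {p : Fin N → Euc n} (hp : p ∈ Fevent T N) :
    ENNReal.ofReal (Real.exp (-(m * (sphσ n (⋃ i, Aset T (p i))).toReal)))
      ≤ ENNReal.ofReal
          (Real.exp ((N : ℝ) ^ 2 * Real.exp (-(n : ℝ) ^ (0.1 : ℝ)) * (n : ℝ) ^ ε₀))
        * ∏ i, ENNReal.ofReal (Real.exp (-(m * (sphσ n (Aset T (p i))).toReal))) := by
  classical
  haveI := aux7_sphProb hn
  obtain ⟨hpD, hpF⟩ := hp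
  set δr : ℝ := Real.exp (-(n : ℝ) ^ (0.1 : ℝ)) with hδr
  set B : ℝ := (n : ℝ) ^ ε₀ with hB
  have hδr0 : 0 ≤ δr := (Real.exp_pos _).le
  have hB0 : 0 ≤ B := Real.rpow_nonneg (Nat.cast_nonneg n) ε₀
  set s : Fin N → ℝ := fun i => (sphσ n (Aset T (p i))).toReal with hs
  set u : ℝ := (sphσ n (⋃ i, Aset T (p i))).toReal with hu
  have hs0 : ∀ i, 0 ≤ s i := fun i => ENNReal.toReal_nonneg
  have hsB : ∀ i, m * s i ≤ B := fun i => aux7_sA_bound hn T m hm ε₀ hvol (hpD i)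
  -- Bonferroni in ℝ≥0∞ and conversion to ℝ
  have hbon := aux7_bonferroni (sphσ n) (fun i => Aset T (p i))
    (fun i => aux7_Aset_meas T (p i)) Finset.univ
  simp only [Finset.mem_univ, Set.iUnion_true] at hbon
  have hpair : ∑ i : Fin N, ∑ j ∈ Finset.univ.erase i,
        sphσ n (Aset T (p i) ∩ Aset T (p j))
      ≤ (N : ℝ≥0∞) * (ENNReal.ofReal δr * ∑ j : Fin N, sphσ n (Aset T (p j))) := by
    calc ∑ i : Fin N, ∑ j ∈ Finset.univ.erase i, sphσ n (Aset T (p i) ∩ Aset T (p j))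
        ≤ ∑ _i : Fin N, (ENNReal.ofReal δr * ∑ j : Fin N, sphσ n (Aset T (p j))) := by
          refine Finset.sum_le_sum fun i _ => ?_
          calc ∑ j ∈ Finset.univ.erase i, sphσ n (Aset T (p i) ∩ Aset T (p j))
              ≤ ∑ j ∈ Finset.univ.erase i, ENNReal.ofReal δr * sphσ n (Aset T (p j)) := by
                refine Finset.sum_le_sum fun j hj => ?_
                exact (hpF i j (Finset.mem_erase.mp hj).1.symm).le
            _ ≤ ∑ j : Fin N, ENNReal.ofReal δr * sphσ n (Aset T (p j)) :=
                Finset.sum_le_sum_of_subset (Finset.erase_subset i Finset.univ)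
            _ = ENNReal.ofReal δr * ∑ j : Fin N, sphσ n (Aset T (p j)) := by
                rw [Finset.mul_sum]
      _ = (N : ℝ≥0∞) * (ENNReal.ofReal δr * ∑ j : Fin N, sphσ n (Aset T (p j))) := by
          rw [Finset.sum_const, Finset.card_univ, Fintype.card_fin, nsmul_eq_mul]
  have henn : ∑ i : Fin N, sphσ n (Aset T (p i))
      ≤ sphσ n (⋃ i, Aset T (p i))
        + (N : ℝ≥0∞) * (ENNReal.ofReal δr * ∑ j : Fin N, sphσ n (Aset T (p j))) :=
    hbon.trans (add_le_add_right hpair _)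
  have hfin : ∀ i, sphσ n (Aset T (p i)) ≠ ⊤ := fun i => measure_ne_top _ _
  have hSfin : (∑ j : Fin N, sphσ n (Aset T (p j))) ≠ ⊤ :=
    ENNReal.sum_ne_top.mpr fun j _ => hfin j
  have hRfin : sphσ n (⋃ i, Aset T (p i))
      + (N : ℝ≥0∞) * (ENNReal.ofReal δr * ∑ j : Fin N, sphσ n (Aset T (p j))) ≠ ⊤ :=
    ENNReal.add_ne_top.mpr ⟨measure_ne_top _ _,
      ENNReal.mul_ne_top (ENNReal.natCast_ne_top N)
        (ENNReal.mul_ne_top ENNReal.ofReal_ne_top hSfin)⟩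
  have hureal : ∑ i, s i ≤ u + (N : ℝ) * (δr * ∑ j, s j) := by
    have h := ENNReal.toReal_mono hRfin henn
    rw [ENNReal.toReal_sum (fun i _ => hfin i)] at h
    rw [ENNReal.toReal_add (measure_ne_top _ _) (ENNReal.mul_ne_top (ENNReal.natCast_ne_top N)
        (ENNReal.mul_ne_top ENNReal.ofReal_ne_top hSfin)),
      ENNReal.toReal_mul, ENNReal.toReal_mul,
      ENNReal.toReal_ofReal hδr0, ENNReal.toReal_sum (fun i _ => hfin i)] at h
    simpa using h
  -- real inequality
  have hprod : ∏ i, ENNReal.ofReal (Real.exp (-(m * s i)))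
      = ENNReal.ofReal (∏ i, Real.exp (-(m * s i))) :=
    (ENNReal.ofReal_prod_of_nonneg fun i _ => (Real.exp_pos _).le).symm
  rw [hprod, ← ENNReal.ofReal_mul (Real.exp_pos _).le]
  apply ENNReal.ofReal_le_ofReal
  rw [← Real.exp_sum, ← Real.exp_add, Real.exp_le_exp]
  -- - (m*u) ≤ N²δrB + Σ (−(m * s i))
  have hsum : ∑ i, -(m * s i) = -(m * ∑ i, s i) := by
    rw [Finset.sum_neg_distrib, ← Finset.mul_sum]
  rw [hsum]
  have hMS : m * ∑ i, s i ≤ (N : ℝ) * B := by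
    rw [Finset.mul_sum]
    calc ∑ i, m * s i ≤ ∑ _i : Fin N, B := Finset.sum_le_sum fun i _ => hsB i
      _ = (N : ℝ) * B := by rw [Finset.sum_const, Finset.card_univ, Fintype.card_fin,
        nsmul_eq_mul]
  have h5 : m * ((N : ℝ) * (δr * ∑ j, s j)) = ((N : ℝ) * δr) * (m * ∑ j, s j) := by ring
  have h6 : ((N : ℝ) * δr) * (m * ∑ j, s j) ≤ ((N : ℝ) * δr) * ((N : ℝ) * B) :=
    mul_le_mul_of_nonneg_left hMS (by positivity)
  have h7 : m * (∑ i, s i) ≤ m * u + ((N : ℝ) * δr) * ((N : ℝ) * B) := by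
    have := mul_le_mul_of_nonneg_left hureal hm.le
    rw [mul_add, h5] at this
    linarith
  have h8 : ((N : ℝ) * δr) * ((N : ℝ) * B) = (N : ℝ) ^ 2 * δr * B := by ring
  linarith [h7, h8.le]

lemma aux7_eventually : ∀ᶠ n : ℕ in Filter.atTop,
    ∀ N : ℕ, (N : ℝ) ≤ Real.exp ((n : ℝ) ^ (1/100 : ℝ)) →
      Real.exp ((N : ℝ) ^ 2 * Real.exp (-(n : ℝ) ^ (0.1 : ℝ)) * (n : ℝ) ^ (1/100 : ℝ))
        ≤ 1 + Real.exp (-(n : ℝ) ^ (1/100 : ℝ)) := by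
  have h1 : ∀ᶠ n : ℕ in Filter.atTop, (1 : ℝ) ≤ (n : ℝ) := by
    filter_upwards [Filter.eventually_ge_atTop 1] with n hn
    exact_mod_cast hn
  have h2 : ∀ᶠ n : ℕ in Filter.atTop, (5 : ℝ) ≤ (n : ℝ) ^ ((0.1 : ℝ) - 1/100) := by
    have ht : Filter.Tendsto (fun n : ℕ => (n : ℝ) ^ ((0.1 : ℝ) - 1/100))
        Filter.atTop Filter.atTop :=
      (tendsto_rpow_atTop (by norm_num)).comp tendsto_natCast_atTop_atTop
    exact ht.eventually_ge_atTop 5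
  filter_upwards [h1, h2] with n hn1 hn5 N hN
  set t : ℝ := (n : ℝ) with ht
  have ht0 : 0 < t := lt_of_lt_of_le one_pos hn1
  set ta : ℝ := t ^ (1/100 : ℝ) with hta
  set tb : ℝ := t ^ (0.1 : ℝ) with htb
  have hta1 : 1 ≤ ta := by
    have := Real.rpow_le_rpow (by norm_num : (0:ℝ) ≤ 1) hn1 (by norm_num : (0:ℝ) ≤ 1/100)
    rwa [Real.one_rpow] at this
  have htb_eq : tb = ta * t ^ ((0.1 : ℝ) - 1/100) := by
    rw [hta, htb, ← Real.rpow_add ht0]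
    norm_num
  have key1 : 4 * ta + 1 ≤ tb := by
    have h5 : 5 * ta ≤ tb := by
      rw [htb_eq]
      calc 5 * ta = ta * 5 := by ring
        _ ≤ ta * t ^ ((0.1 : ℝ) - 1/100) :=
          mul_le_mul_of_nonneg_left hn5 (by linarith)
    nlinarith
  set C : ℝ := (N : ℝ) ^ 2 * Real.exp (-tb) * ta with hC
  have hC0 : 0 ≤ C := by positivity
  have hCle : C ≤ Real.exp (-ta) * Real.exp (-1) := by
    have hN2 : (N : ℝ) ^ 2 ≤ Real.exp ta ^ 2 :=
      pow_le_pow_left₀ (Nat.cast_nonneg N) hN 2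
    have hta_exp : ta ≤ Real.exp ta := by linarith [Real.add_one_le_exp ta]
    have : C ≤ Real.exp ta ^ 2 * Real.exp (-tb) * Real.exp ta := by
      rw [hC]
      have e1 : (N:ℝ)^2 * Real.exp (-tb) ≤ Real.exp ta ^2 * Real.exp (-tb) :=
        mul_le_mul_of_nonneg_right hN2 (Real.exp_pos _).le
      have e2 : (N:ℝ)^2 * Real.exp (-tb) * ta ≤ Real.exp ta ^2 * Real.exp (-tb) * ta :=
        mul_le_mul_of_nonneg_right e1 (by linarith)
      have e3 : Real.exp ta ^2 * Real.exp (-tb) * ta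
          ≤ Real.exp ta ^2 * Real.exp (-tb) * Real.exp ta :=
        mul_le_mul_of_nonneg_left hta_exp (by positivity)
      linarith
    have e4 : Real.exp ta ^ 2 * Real.exp (-tb) * Real.exp ta
        = Real.exp (3 * ta - tb) := by
      rw [pow_two, ← Real.exp_add, ← Real.exp_add, ← Real.exp_add]
      ring_nf
    have e5 : Real.exp (3 * ta - tb) ≤ Real.exp (-ta - 1) :=
      Real.exp_le_exp.mpr (by linarith)
    have e6 : Real.exp (-ta - 1) = Real.exp (-ta) * Real.exp (-1) := by
      rw [← Real.exp_add]; ring_nf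
    linarith
  have hexp1 : Real.exp (-1) ≤ 1/2 := by
    rw [Real.exp_neg]
    rw [inv_le_comm₀ (Real.exp_pos _) (by norm_num)]
    linarith [Real.add_one_le_exp (1 : ℝ)]
  have hexpta : Real.exp (-ta) ≤ 1 := Real.exp_le_one_iff.mpr (by linarith)
  have hC2 : 2 * C ≤ Real.exp (-ta) := by nlinarith [(Real.exp_pos (-ta)).le]
  have hChalf : C ≤ 1/2 := by nlinarith
  -- exp C ≤ 1 + 2C ≤ 1 + exp (-ta)
  have hstep : Real.exp C * (1 - C) ≤ 1 := by
    have := Real.add_one_le_exp (-C)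
    have h' : 1 - C ≤ Real.exp (-C) := by linarith
    calc Real.exp C * (1 - C) ≤ Real.exp C * Real.exp (-C) :=
          mul_le_mul_of_nonneg_left h' (Real.exp_pos _).le
      _ = 1 := by rw [← Real.exp_add]; simp
  have hfin : Real.exp C ≤ 1 + 2 * C := by
    nlinarith [Real.exp_pos C]
  linarith

/-- Lemma 2(iii): There exist `ε₀ > 0`, `ε₁ > 0` and `n₀ ∈ ℕ` such that for all
`n ≥ n₀`, every deletion profile `T`, every `m > 0` satisfying condition (vol2), and every
`N ∈ ℕ` with `N ≤ e^{n^{ε₀}}`: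
`E[Vol_{(ℝ^n)^N}(K_{T,m}^N ∩ F)] ≤ (1 + e^{-n^{ε₁}})·(E[Vol(K_{T,m})])^N`,
where `Vol_{(ℝ^n)^N}` is Lebesgue measure on `(ℝ^n)^N` and `K^N` the `N`-fold product. -/
theorem statement7 :
    ∃ ε₀ : ℝ, 0 < ε₀ ∧ ∃ ε₁ : ℝ, 0 < ε₁ ∧ ∃ n₀ : ℕ, ∀ n : ℕ, n₀ ≤ n →
      ∀ T : DeletionProfile n, ∀ m : ℝ, 0 < m → vol2Cond T m ε₀ →
        ∀ N : ℕ, (N : ℝ) ≤ Real.exp ((n : ℝ) ^ ε₀) →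
          bodyLExp T m
              (fun K => volume ({p : Fin N → Euc n | ∀ i, p i ∈ K} ∩ Fevent T N)) ≤
            (1 + ENNReal.ofReal (Real.exp (-(n : ℝ) ^ ε₁))) * (bodyLExp T m volume) ^ N := by
  refine ⟨1/100, by norm_num, 1/100, by norm_num, ?_⟩
  obtain ⟨n₁, hn₁⟩ := Filter.eventually_atTop.mp aux7_eventually
  refine ⟨max n₁ 1, fun n hn T m hm hvol N hN => ?_⟩
  have hn1 : 1 ≤ n := le_trans (le_max_right _ _) hn
  have hnum := hn₁ n (le_trans (le_max_left _ _) hn) N hN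
  haveI := aux7_sphProb hn1
  have hF := aux7_Fevent_meas hn1 T N
  have hFD : ∀ p ∈ Fevent T N, ∀ i, p i ∈ Dball n := fun p hp => hp.1
  rw [aux7_LHS_rep hn1 T m hm hF hFD, aux7_RHS_rep hn1 T m hm]
  set g : Euc n → ℝ≥0∞ :=
    fun x => ENNReal.ofReal (Real.exp (-(m * (sphσ n (Aset T x)).toReal))) with hg
  set h : Euc n → ℝ≥0∞ := (Dball n).indicator g with hh
  have hDm : MeasurableSet (Dball n) := Metric.isClosed_closedBall.measurableSet
  have hgm : Measurable g := by
    have h1 : Measurable fun x : Euc n => -(m * (sphσ n (Aset T x)).toReal) :=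
      ((aux7_meas_sA hn1 T).ennreal_toReal.const_mul m).neg
    exact (Real.measurable_exp.comp h1).ennreal_ofReal
  have hhm : Measurable h := hgm.indicator hDm
  set C : ℝ := (N : ℝ) ^ 2 * Real.exp (-(n : ℝ) ^ (0.1 : ℝ)) * (n : ℝ) ^ (1/100 : ℝ)
    with hC
  have step1 : ∫⁻ p, (Fevent T N).indicator (fun p =>
        ENNReal.ofReal (Real.exp (-(m * (sphσ n (⋃ i, Aset T (p i))).toReal)))) p
      ≤ ∫⁻ p : Fin N → Euc n, ENNReal.ofReal (Real.exp C) * ∏ i, h (p i) := by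
    apply lintegral_mono
    intro p
    by_cases hp : p ∈ Fevent T N
    · rw [Set.indicator_of_mem hp]
      have hpt := aux7_pointwise hn1 T m hm (1/100) hvol hp
      have e : ∏ i, ENNReal.ofReal (Real.exp (-(m * (sphσ n (Aset T (p i))).toReal)))
          = ∏ i, h (p i) := by
        refine Finset.prod_congr rfl fun i _ => ?_
        rw [hh, Set.indicator_of_mem (hFD p hp i)]
      rw [e] at hpt
      exact hpt
    · rw [Set.indicator_of_notMem hp]
      exact zero_le
  have step2 : ∫⁻ p : Fin N → Euc n, ENNReal.ofReal (Real.exp C) * ∏ i, h (p i)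
      = ENNReal.ofReal (Real.exp C) * (∫⁻ x, h x) ^ N := by
    rw [lintegral_const_mul' _ _ ENNReal.ofReal_ne_top]
    congr 1
    have hpi := aux7_lintegral_pi_prod (volume : Measure (Euc n)) h hhm N
    rw [← volume_pi] at hpi
    exact hpi
  refine le_trans step1 (le_trans step2.le ?_)
  have hfac : ENNReal.ofReal (Real.exp C)
      ≤ 1 + ENNReal.ofReal (Real.exp (-(n : ℝ) ^ (1/100 : ℝ))) := by
    calc ENNReal.ofReal (Real.exp C)
        ≤ ENNReal.ofReal (1 + Real.exp (-(n : ℝ) ^ (1/100 : ℝ))) :=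
          ENNReal.ofReal_le_ofReal hnum
      _ = 1 + ENNReal.ofReal (Real.exp (-(n : ℝ) ^ (1/100 : ℝ))) := by
          rw [ENNReal.ofReal_add (by norm_num) (Real.exp_pos _).le, ENNReal.ofReal_one]
  exact mul_le_mul_left hfac _
end

section
/- Let c > 0, let x₁ < x₂, y₁ ≤ y₂, y₁' ≤ y₂' be real numbers, and let {f_α}_{α ∈ I} be a family of twice-differentiable real-valued functions on [x₁, x₂] with the property that for every triplet (x, y, y') ∈ [x₁,x₂] × [y₁,y₂] × [y₁',y₂'] there exists α ∈ I such that f_α(x) = y, f_α'(x) = y', and f_α''(t) ≤ c for all t ∈ [x₁, x₂]. Then for every twice-differentiable function g : [x₁, x₂] → [y₁, y₂] satisfying g'(x) ∈ [y₁', y₂'] and g''(x) > c for all x ∈ [x₁, x₂], there exists a subset I' ⊆ I such that g(x) = sup_{α ∈ I'} f_α(x) for every x ∈ [x₁, x₂]. (Lemma 6: representing a strongly convex function as a supremum of a subfamily.) -/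
open Set

lemma aux16 {x₁ x₂ x₀ : ℝ} (hx₀ : x₀ ∈ Icc x₁ x₂) (h h' h'' : ℝ → ℝ)
    (hd : ∀ t ∈ Icc x₁ x₂, HasDerivWithinAt h (h' t) (Icc x₁ x₂) t ∧
      HasDerivWithinAt h' (h'' t) (Icc x₁ x₂) t)
    (h0 : h x₀ = 0) (h0' : h' x₀ = 0)
    (hpos : ∀ t ∈ Icc x₁ x₂, 0 < h'' t) :
    ∀ x ∈ Icc x₁ x₂, 0 ≤ h x := by
  have hcont : ContinuousOn h (Icc x₁ x₂) := fun t ht =>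
    (hd t ht).1.continuousWithinAt
  have hcont' : ContinuousOn h' (Icc x₁ x₂) := fun t ht =>
    (hd t ht).2.continuousWithinAt
  have hderiv : ∀ t ∈ Ioo x₁ x₂, deriv h t = h' t := fun t ht =>
    ((hd t (Ioo_subset_Icc_self ht)).1.hasDerivAt (Icc_mem_nhds ht.1 ht.2)).deriv
  have hderiv' : ∀ t ∈ Ioo x₁ x₂, deriv h' t = h'' t := fun t ht =>
    ((hd t (Ioo_subset_Icc_self ht)).2.hasDerivAt (Icc_mem_nhds ht.1 ht.2)).deriv
  have hmono' : StrictMonoOn h' (Icc x₁ x₂) := by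
    apply strictMonoOn_of_deriv_pos (convex_Icc _ _) hcont'
    intro t ht
    rw [interior_Icc] at ht
    rw [hderiv' t ht]
    exact hpos t (Ioo_subset_Icc_self ht)
  intro x hxI
  rcases lt_trichotomy x x₀ with hlt | rfl | hgt
  · have hsub : Icc x x₀ ⊆ Icc x₁ x₂ := Icc_subset_Icc hxI.1 hx₀.2
    have : StrictAntiOn h (Icc x x₀) := by
      apply strictAntiOn_of_deriv_neg (convex_Icc _ _) (hcont.mono hsub)
      intro t ht
      rw [interior_Icc] at ht
      have htI : t ∈ Ioo x₁ x₂ := ⟨lt_of_le_of_lt hxI.1 ht.1, lt_of_lt_of_le ht.2 hx₀.2⟩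
      rw [hderiv t htI]
      have := hmono' (Ioo_subset_Icc_self htI) hx₀ ht.2
      linarith
    have := this ⟨le_refl x, hlt.le⟩ ⟨hlt.le, le_refl x₀⟩ hlt
    linarith
  · simp [h0]
  · have hsub : Icc x₀ x ⊆ Icc x₁ x₂ := Icc_subset_Icc hx₀.1 hxI.2
    have : StrictMonoOn h (Icc x₀ x) := by
      apply strictMonoOn_of_deriv_pos (convex_Icc _ _) (hcont.mono hsub)
      intro t ht
      rw [interior_Icc] at ht
      have htI : t ∈ Ioo x₁ x₂ := ⟨lt_of_le_of_lt hx₀.1 ht.1, lt_of_lt_of_le ht.2 hxI.2⟩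
      rw [hderiv t htI]
      have := hmono' hx₀ (Ioo_subset_Icc_self htI) ht.1
      linarith
    have := this ⟨le_refl x₀, hgt.le⟩ ⟨hgt.le, le_refl x⟩ hgt
    linarith


/-- Lemma 6: Let `c > 0`, let `x₁ < x₂`, `y₁ ≤ y₂`, `y₁' ≤ y₂'`, and let
`{f_α}` be a family of twice-differentiable functions on `[x₁, x₂]` such that for every
triplet `(x, y, y') ∈ [x₁,x₂] × [y₁,y₂] × [y₁',y₂']` there exists `α` with `f_α(x) = y`,
`f_α'(x) = y'`, and `f_α''(t) ≤ c` for all `t ∈ [x₁,x₂]`. Then every twice-differentiable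
`g : [x₁,x₂] → [y₁,y₂]` with `g' ∈ [y₁',y₂']` and `g'' > c` on `[x₁,x₂]` is the pointwise
supremum of a subfamily: there is `I'` with `g(x) = sup_{α ∈ I'} f_α(x)` on `[x₁,x₂]`. -/
theorem statement16 {ι : Type*} (c x₁ x₂ y₁ y₂ y₁' y₂' : ℝ)
    (hc : 0 < c) (hx : x₁ < x₂) (hy : y₁ ≤ y₂) (hy' : y₁' ≤ y₂')
    (f f' f'' : ι → ℝ → ℝ)
    (hf : ∀ α, ∀ t ∈ Icc x₁ x₂,
      HasDerivWithinAt (f α) (f' α t) (Icc x₁ x₂) t ∧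
      HasDerivWithinAt (f' α) (f'' α t) (Icc x₁ x₂) t)
    (hfam : ∀ x ∈ Icc x₁ x₂, ∀ y ∈ Icc y₁ y₂, ∀ y' ∈ Icc y₁' y₂',
      ∃ α, f α x = y ∧ f' α x = y' ∧ ∀ t ∈ Icc x₁ x₂, f'' α t ≤ c)
    (g g' g'' : ℝ → ℝ)
    (hg : ∀ t ∈ Icc x₁ x₂,
      HasDerivWithinAt g (g' t) (Icc x₁ x₂) t ∧
      HasDerivWithinAt g' (g'' t) (Icc x₁ x₂) t)
    (hgval : ∀ x ∈ Icc x₁ x₂, g x ∈ Icc y₁ y₂)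
    (hgder : ∀ x ∈ Icc x₁ x₂, g' x ∈ Icc y₁' y₂')
    (hgconv : ∀ x ∈ Icc x₁ x₂, c < g'' x) :
    ∃ I' : Set ι, ∀ x ∈ Icc x₁ x₂, g x = ⨆ α : I', f (α : ι) x := by
  refine ⟨{α | (∀ t ∈ Icc x₁ x₂, f α t ≤ g t) ∧ ∃ x₀ ∈ Icc x₁ x₂, f α x₀ = g x₀}, ?_⟩
  -- key: for each x₀ in Icc, there is α in I' with f α x₀ = g x₀
  have key : ∀ x₀ ∈ Icc x₁ x₂, ∃ α, (∀ t ∈ Icc x₁ x₂, f α t ≤ g t) ∧ f α x₀ = g x₀ := by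
    intro x₀ hx₀
    obtain ⟨α, hαv, hαd, hαc⟩ := hfam x₀ hx₀ (g x₀) (hgval x₀ hx₀) (g' x₀) (hgder x₀ hx₀)
    refine ⟨α, ?_, hαv⟩
    have := aux16 hx₀ (fun t => g t - f α t) (fun t => g' t - f' α t)
      (fun t => g'' t - f'' α t)
      (fun t ht => ⟨(hg t ht).1.sub (hf α t ht).1, (hg t ht).2.sub (hf α t ht).2⟩)
      (by simp [hαv]) (by simp [hαd])
      (fun t ht => by have h1 := hαc t ht; have h2 := hgconv t ht; linarith)
    intro t ht
    have h3 := this t ht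
    linarith
  intro x hxI
  obtain ⟨α₀, hα₀le, hα₀eq⟩ := key x hxI
  have hα₀mem : α₀ ∈ {α | (∀ t ∈ Icc x₁ x₂, f α t ≤ g t) ∧ ∃ x₀ ∈ Icc x₁ x₂, f α x₀ = g x₀} :=
    ⟨hα₀le, x, hxI, hα₀eq⟩
  haveI : Nonempty ({α | (∀ t ∈ Icc x₁ x₂, f α t ≤ g t) ∧
      ∃ x₀ ∈ Icc x₁ x₂, f α x₀ = g x₀} : Set ι) := ⟨⟨α₀, hα₀mem⟩⟩
  have hbdd : BddAbove (range fun α : {α | (∀ t ∈ Icc x₁ x₂, f α t ≤ g t) ∧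
      ∃ x₀ ∈ Icc x₁ x₂, f α x₀ = g x₀} => f (α : ι) x) := by
    refine ⟨g x, ?_⟩
    rintro _ ⟨⟨α, hα⟩, rfl⟩
    exact hα.1 x hxI
  apply le_antisymm
  · calc g x = f α₀ x := hα₀eq.symm
    _ ≤ _ := le_ciSup hbdd ⟨α₀, hα₀mem⟩
  · exact ciSup_le fun ⟨α, hα⟩ => hα.1 x hxI
end

section
/- There exists n₀ ∈ ℕ such that for all n ≥ n₀, all a ∈ [2, 200] and all b ∈ [−1000, 1000], there exists a unique affine function f : ℝ → ℝ with negative slope satisfying both f(δ₀(1+δ₁b)) = √(1−(δ₀(1+δ₁b))²) and min_{x ∈ ℝ} √(x² + f(x)²) = a·δ₀ (i.e., the line {(x, f(x)) : x ∈ ℝ} passes through the point of the unit circle at abscissa δ₀(1+δ₁b) and has distance a·δ₀ from the origin). -/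
open MeasureTheory Real
open scoped ENNReal

noncomputable section

/-- The profile of a set `L ⊆ ℝ^n`: `g_L(r) = 1 − σ({θ ∈ S^{n-1} : rθ ∈ L})`. -/
def profileFn (n : ℕ) (L : Set (Euc n)) (r : ℝ) : ℝ :=
  1 - (sphσ n {θ : Sph n | r • (θ : Euc n) ∈ L}).toReal

/-- `δ₀ = n^{-1/4}`. -/
def del0 (n : ℕ) : ℝ := (n : ℝ) ^ (-(1/4) : ℝ)

/-- `δ₁ = n^{-0.99}`. -/
def del1 (n : ℕ) : ℝ := (n : ℝ) ^ (-(0.99) : ℝ)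

/-- `Ψ(x) = c_n ∫_{min(x,1)}^1 (1−t²)^{(n−3)/2} dt`, with
`c_n = (∫_{−1}^1 (1−t²)^{(n−3)/2} dt)⁻¹`: the normalized surface measure of the spherical cap
at height `x`. -/
def Psi (n : ℕ) (x : ℝ) : ℝ :=
  (∫ t in (-1 : ℝ)..(1 : ℝ), (1 - t ^ 2) ^ (((n : ℝ) - 3) / 2))⁻¹ *
    ∫ t in (min x 1)..(1 : ℝ), (1 - t ^ 2) ^ (((n : ℝ) - 3) / 2)

/-- `f` is an affine function with negative slope. -/
def AffineNegSlope (f : ℝ → ℝ) : Prop := ∃ s c : ℝ, s < 0 ∧ ∀ x, f x = s * x + c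

/-- The line `{(x, f(x))}` meets the unit circle at abscissa `δ₀(1+δ₁b)`:
`f(δ₀(1+δ₁b)) = √(1−(δ₀(1+δ₁b))²)`. -/
def TouchesCircle (n : ℕ) (b : ℝ) (f : ℝ → ℝ) : Prop :=
  f (del0 n * (1 + del1 n * b)) = Real.sqrt (1 - (del0 n * (1 + del1 n * b)) ^ 2)

/-- The line `{(x, f(x))}` has distance `a·δ₀` from the origin:
`min_{x∈ℝ} √(x² + f(x)²) = a·δ₀`. -/
def DistFromOrigin (n : ℕ) (a : ℝ) (f : ℝ → ℝ) : Prop :=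
  IsLeast {y : ℝ | ∃ x : ℝ, y = Real.sqrt (x ^ 2 + f x ^ 2)} (a * del0 n)

/-- The cone body `T_{a,b} = D_n ∩ {(x, y) ∈ ℝ × ℝ^{n−1} : |y| ≤ f(x)}`, where the first
coordinate of `z ∈ ℝ^n` plays the role of `x` and `|y| = √(‖z‖² − z₁²)`. -/
def coneBody (n : ℕ) [NeZero n] (f : ℝ → ℝ) : Set (Euc n) :=
  Dball n ∩ {z | Real.sqrt (‖z‖ ^ 2 - (inner ℝ z (EuclideanSpace.single (0 : Fin n) (1 : ℝ)) : ℝ) ^ 2)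
    ≤ f (inner ℝ z (EuclideanSpace.single (0 : Fin n) (1 : ℝ)) : ℝ)}

end


private lemma line_isLeast (s c : ℝ) :
    IsLeast {y : ℝ | ∃ x : ℝ, y = Real.sqrt (x ^ 2 + (s * x + c) ^ 2)}
      (|c| / Real.sqrt (1 + s ^ 2)) := by
  have hs1 : (0:ℝ) < 1 + s ^ 2 := by positivity
  constructor
  · refine ⟨-(s * c) / (1 + s ^ 2), ?_⟩
    have h1 : (-(s*c)/(1+s^2)) ^ 2 + (s * (-(s*c)/(1+s^2)) + c) ^ 2 = c^2 / (1+s^2) := by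
      field_simp; ring
    rw [h1, Real.sqrt_div (sq_nonneg c), Real.sqrt_sq_eq_abs]
  · rintro y ⟨x, rfl⟩
    rw [Real.le_sqrt (by positivity) (by positivity)]
    rw [div_pow, sq_abs, Real.sq_sqrt hs1.le, div_le_iff₀ hs1]
    nlinarith [sq_nonneg ((1+s^2)*x + s*c)]

private lemma neg_root_unique {A B C s₁ s₂ : ℝ} (hA : A < 0) (hC : 0 < C)
    (h1 : A * s₁^2 + B * s₁ + C = 0) (h2 : A * s₂^2 + B * s₂ + C = 0)
    (hs1 : s₁ < 0) (hs2 : s₂ < 0) : s₁ = s₂ := by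
  by_contra h
  have key : (s₁ - s₂) * (A * (s₁ * s₂) - C) = 0 := by linear_combination s₂ * h1 - s₁ * h2
  have h3 : A * (s₁ * s₂) - C = 0 := by
    rcases mul_eq_zero.mp key with h' | h'
    · exact absurd (sub_eq_zero.mp h') h
    · exact h'
  nlinarith [mul_pos (neg_pos.mpr hs1) (neg_pos.mpr hs2)]

set_option maxHeartbeats 2000000 in
private lemma main_aux (δ t a : ℝ) (hd0 : 0 < δ) (hd0sq : δ^2 ≤ 1/40004)
    (ht : |t| ≤ 1/2) (ha2 : 2 ≤ a) (ha200 : a ≤ 200) :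
    ∃! f : ℝ → ℝ, (∃ s c : ℝ, s < 0 ∧ ∀ x, f x = s * x + c) ∧
      f (δ * (1 + t)) = Real.sqrt (1 - (δ * (1 + t)) ^ 2) ∧
      IsLeast {y : ℝ | ∃ x : ℝ, y = Real.sqrt (x ^ 2 + f x ^ 2)} (a * δ) := by
  obtain ⟨ht1, ht2⟩ := abs_le.mp ht
  set x₀ : ℝ := δ * (1 + t) with hx₀def
  set r : ℝ := a * δ with hrdef
  have hx0pos : 0 < x₀ := by rw [hx₀def]; nlinarith
  have hx0le : x₀ ≤ 3/2 * δ := by rw [hx₀def]; nlinarith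
  have hrpos : 0 < r := by rw [hrdef]; nlinarith
  have hx0lt : x₀ < r := by rw [hrdef]; nlinarith
  have hrle : r ≤ 200 * δ := by rw [hrdef]; nlinarith
  have hxr1 : x₀^2 + r^2 < 1 := by nlinarith
  set y₀ : ℝ := Real.sqrt (1 - x₀^2) with hy₀def
  have hy0sq : y₀^2 = 1 - x₀^2 := Real.sq_sqrt (by nlinarith)
  have hy0pos : 0 < y₀ := Real.sqrt_pos.mpr (by nlinarith)
  set w : ℝ := Real.sqrt (1 - r^2) with hwdef
  have hwsq : w^2 = 1 - r^2 := Real.sq_sqrt (by nlinarith)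
  have hwpos : 0 < w := Real.sqrt_pos.mpr (by nlinarith)
  clear_value y₀ w
  have hA : x₀^2 - r^2 < 0 := by nlinarith
  have hAne : x₀^2 - r^2 ≠ 0 := hA.ne
  set s : ℝ := (x₀*y₀ + r*w) / (x₀^2 - r^2) with hsdef
  have hs : s < 0 := div_neg_of_pos_of_neg (by positivity) hA
  have hsA : s * (x₀^2 - r^2) = x₀*y₀ + r*w := by
    rw [hsdef]; field_simp
  clear_value s
  have hquad : (x₀^2 - r^2) * s^2 + (-(2*x₀*y₀)) * s + (y₀^2 - r^2) = 0 := by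
    have hAmul : (x₀^2 - r^2) * ((x₀^2 - r^2) * s^2 + (-(2*x₀*y₀)) * s + (y₀^2 - r^2)) = 0 := by
      linear_combination (s * (x₀^2 - r^2) + x₀*y₀ + r*w - 2*x₀*y₀) * hsA + r^2 * hwsq
        - r^2 * hy0sq
    exact (mul_eq_zero.mp hAmul).resolve_left hAne
  set c : ℝ := y₀ - s * x₀ with hcdef
  clear_value c
  have hcpos : 0 < c := by
    rw [hcdef]; nlinarith [mul_pos (neg_pos.mpr hs) hx0pos]
  have hcsq : c^2 = r^2 * (1 + s^2) := by rw [hcdef]; linear_combination hquad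
  have hss1 : (0:ℝ) < Real.sqrt (1 + s^2) := Real.sqrt_pos.mpr (by positivity)
  have hval : |c| / Real.sqrt (1 + s^2) = r := by
    have hcr : c = r * Real.sqrt (1 + s^2) := by
      have h1 : c = Real.sqrt (c^2) := (Real.sqrt_sq hcpos.le).symm
      rw [h1, hcsq, Real.sqrt_mul (sq_nonneg r), Real.sqrt_sq hrpos.le]
    rw [abs_of_pos hcpos, hcr]
    field_simp
  refine ⟨fun x => s * x + c, ⟨⟨s, c, hs, fun _ => rfl⟩, ?_, ?_⟩, ?_⟩
  · show s * x₀ + c = y₀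
    rw [hcdef]; ring
  · show IsLeast {y : ℝ | ∃ x : ℝ, y = Real.sqrt (x ^ 2 + (s * x + c) ^ 2)} r
    rw [← hval]
    exact line_isLeast s c
  · rintro g ⟨⟨s', c', hs', hg⟩, htc, hdf⟩
    have hseteq : {y : ℝ | ∃ x : ℝ, y = Real.sqrt (x ^ 2 + g x ^ 2)}
        = {y : ℝ | ∃ x : ℝ, y = Real.sqrt (x ^ 2 + (s' * x + c') ^ 2)} := by
      ext y; constructor <;> rintro ⟨x, rfl⟩ <;> exact ⟨x, by rw [hg]⟩
    rw [hseteq] at hdf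
    have hval' : |c'| / Real.sqrt (1 + s'^2) = r := (line_isLeast s' c').unique hdf
    have hss1' : (0:ℝ) < Real.sqrt (1 + s'^2) := Real.sqrt_pos.mpr (by positivity)
    have hc'sq : c'^2 = r^2 * (1 + s'^2) := by
      have h1 : |c'| = r * Real.sqrt (1 + s'^2) := by
        rw [div_eq_iff hss1'.ne'] at hval'; linarith
      have h2 : |c'|^2 = (r * Real.sqrt (1 + s'^2))^2 := by rw [h1]
      rw [sq_abs, mul_pow, Real.sq_sqrt (by positivity)] at h2
      linarith
    have hc' : s' * x₀ + c' = y₀ := by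
      rw [hg] at htc; exact htc
    have hquad' : (x₀^2 - r^2) * s'^2 + (-(2*x₀*y₀)) * s' + (y₀^2 - r^2) = 0 := by
      have hc'e : c' = y₀ - s' * x₀ := by linarith
      rw [hc'e] at hc'sq
      linear_combination hc'sq
    have hC : 0 < y₀^2 - r^2 := by rw [hy0sq]; nlinarith
    have hseq : s' = s := neg_root_unique hA hC hquad' hquad hs' hs
    funext x
    rw [hg x, hseq, hcdef]
    have hce : c' = y₀ - s * x₀ := by rw [← hseq]; linarith
    rw [hce]

set_option maxHeartbeats 1000000 in
/-- There exists `n₀ ∈ ℕ` such that for all `n ≥ n₀`, all `a ∈ [2, 200]` and all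
`b ∈ [−1000, 1000]`, there exists a unique affine function `f : ℝ → ℝ` with negative slope
satisfying both `f(δ₀(1+δ₁b)) = √(1−(δ₀(1+δ₁b))²)` and `min_{x∈ℝ} √(x² + f(x)²) = a·δ₀`. -/
theorem statement18 :
    ∃ n₀ : ℕ, ∀ n : ℕ, n₀ ≤ n →
      ∀ a ∈ Set.Icc (2 : ℝ) 200, ∀ b ∈ Set.Icc (-1000 : ℝ) 1000,
        ∃! f : ℝ → ℝ, AffineNegSlope f ∧ TouchesCircle n b f ∧ DistFromOrigin n a f := by
  refine ⟨10^10, fun n hn a ha b hb => ?_⟩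
  obtain ⟨ha2, ha200⟩ := ha
  obtain ⟨hbl, hbu⟩ := hb
  have hn0 : (0:ℝ) < (n:ℝ) := by
    have h : ((10:ℕ)^10 : ℝ) ≤ (n:ℝ) := by exact_mod_cast hn
    push_cast at h; linarith
  have hn1 : (1:ℝ) ≤ (n:ℝ) := by
    have h : ((10:ℕ)^10 : ℝ) ≤ (n:ℝ) := by exact_mod_cast hn
    push_cast at h; linarith
  have hnbig : (10:ℝ)^10 ≤ (n:ℝ) := by
    have h : ((10:ℕ)^10 : ℝ) ≤ (n:ℝ) := by exact_mod_cast hn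
    push_cast at h; linarith
  have hd0 : 0 < del0 n := Real.rpow_pos_of_pos hn0 _
  have hsq : del0 n ^ 2 = (n:ℝ) ^ (-(1/2) : ℝ) := by
    rw [del0, ← Real.rpow_natCast ((n:ℝ) ^ (-(1/4):ℝ)) 2, ← Real.rpow_mul hn0.le]
    norm_num
  have h5 : (40004:ℝ) ≤ (n:ℝ) ^ ((1/2):ℝ) := by
    calc (40004:ℝ) ≤ ((10:ℝ)^10) ^ ((1/2):ℝ) := by
          rw [show ((10:ℝ)^10) = ((10:ℝ)^5)^(2:ℕ) by norm_num,
            ← Real.rpow_natCast ((10:ℝ)^5) 2, ← Real.rpow_mul (by positivity)]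
          norm_num
      _ ≤ _ := Real.rpow_le_rpow (by positivity) hnbig (by norm_num)
  have hsqn : (n:ℝ) ^ (-(1/2):ℝ) ≤ 1/40004 := by
    rw [Real.rpow_neg hn0.le, show (1:ℝ)/40004 = (40004:ℝ)⁻¹ by norm_num]
    exact inv_anti₀ (by norm_num) h5
  have hd0sq : del0 n ^ 2 ≤ 1/40004 := by rw [hsq]; exact hsqn
  have hd1b : |del1 n * b| ≤ 1/2 := by
    have hd1 : del1 n ≤ (n:ℝ) ^ (-(1/2):ℝ) :=
      Real.rpow_le_rpow_of_exponent_le hn1 (by norm_num)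
    have hd1pos : 0 ≤ del1 n := (Real.rpow_pos_of_pos hn0 _).le
    have hh : |del1 n * b| ≤ del1 n * 1000 := by
      rw [abs_mul, abs_of_nonneg hd1pos]
      exact mul_le_mul_of_nonneg_left (abs_le.mpr ⟨hbl, hbu⟩) hd1pos
    nlinarith [hd1.trans hsqn]
  simp only [AffineNegSlope, TouchesCircle, DistFromOrigin]
  exact main_aux (del0 n) (del1 n * b) a hd0 hd0sq hd1b ha2 ha200
end

section
/- There exists n₀ ∈ ℕ such that for all n ≥ n₀, all a ∈ [2, 200], all b ∈ [−1000, 1000] and all r ∈ (1/2, 1]: {θ ∈ S^{n-1} : rθ ∈ T_{a,b}} = {θ ∈ S^{n-1} : ⟨θ, e₁⟩ ≤ x(a,b,r)}, where x(a,b,r) = sin(arcsin(aδ₀/r) − arcsin(aδ₀) + arcsin(δ₀(1+bδ₁))); consequently g_{T_{a,b}}(r) = Ψ(x(a,b,r)). -/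
open MeasureTheory Real
open scoped ENNReal

/-- `x(a,b,r) = sin(arcsin(aδ₀/r) − arcsin(aδ₀) + arcsin(δ₀(1+bδ₁)))`. -/
noncomputable def xabr (n : ℕ) (a b r : ℝ) : ℝ :=
  Real.sin (Real.arcsin (a * del0 n / r) - Real.arcsin (a * del0 n) +
    Real.arcsin (del0 n * (1 + b * del1 n)))


set_option maxHeartbeats 1000000

open scoped Pointwise

section Helpers


-- small-angle: arcsin w ≤ 1/10 for 0 ≤ w ≤ 1/100
lemma arcsin_small {w : ℝ} (h0 : 0 ≤ w) (h1 : w ≤ 1/100) : arcsin w ≤ 1/10 := by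
  have hs : (1:ℝ)/100 ≤ Real.sin (1/10) := by
    have := Real.sin_gt_sub_cube (x := 1/10) (by norm_num)
    nlinarith
  have : arcsin w ≤ arcsin (Real.sin (1/10)) :=
    Real.monotone_arcsin (le_trans h1 hs)
  rwa [Real.arcsin_sin (by nlinarith [Real.pi_gt_three]) (by nlinarith [Real.pi_gt_three])] at this

lemma core_equiv {s c d x₀ r : ℝ} (hs : s < 0) (hc : 0 < c)
    (hx₀ : 0 < x₀) (hx₀d : x₀ < d) (hd500 : d ≤ 1/500)
    (hr : 1/2 < r) (hr1 : r ≤ 1)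
    (htouch : s * x₀ + c = Real.sqrt (1 - x₀ ^ 2))
    (hdist : d = c / Real.sqrt (1 + s ^ 2)) :
    (0 < Real.sin (Real.arcsin (d/r) - Real.arcsin d + Real.arcsin x₀)) ∧
    (Real.sin (Real.arcsin (d/r) - Real.arcsin d + Real.arcsin x₀) < 1) ∧
    ∀ t : ℝ, -1 ≤ t → t ≤ 1 →
      (r * Real.sqrt (1 - t^2) ≤ s * (r * t) + c ↔
        t ≤ Real.sin (Real.arcsin (d/r) - Real.arcsin d + Real.arcsin x₀)) := by
  have hr0 : 0 < r := by linarith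
  have hd0 : 0 < d := lt_trans hx₀ hx₀d
  have hdr0 : 0 < d / r := div_pos hd0 hr0
  have hdr2 : d / r ≤ 2 * d := by
    rw [div_le_iff₀ hr0]
    have h9 : 0 < d * (2*r - 1) := mul_pos hd0 (by linarith)
    linarith
  have hdr100 : d / r ≤ 1/100 := by linarith
  have hdr1 : d / r ≤ 1 := by linarith
  have hddr : d ≤ d / r := by
    rw [le_div_iff₀ hr0]
    have h9 : 0 ≤ d * (1 - r) := mul_nonneg hd0.le (by linarith)
    linarith
  have hx₀1 : x₀ ≤ 1 := by linarith
  set γ := arcsin x₀ with hγdef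
  set β := arcsin d with hβdef
  set α := arcsin (d/r) with hαdef
  have hγ0 : 0 < γ := Real.arcsin_pos.2 hx₀
  have hγβ : γ < β := Real.strictMonoOn_arcsin ⟨by linarith, hx₀1⟩ ⟨by linarith, by linarith⟩ hx₀d
  have hβα : β ≤ α := Real.monotone_arcsin hddr
  have hα10 : α ≤ 1/10 := arcsin_small (le_of_lt hdr0) hdr100
  have hβ10 : β ≤ 1/10 := le_trans hβα hα10
  have hα0 : 0 < α := Real.arcsin_pos.2 hdr0
  have hβ0 : 0 < β := Real.arcsin_pos.2 hd0
  have hγ10 : γ < 1/10 := lt_of_lt_of_le hγβ hβ10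
  have hπ : (3.141592 : ℝ) < π := Real.pi_gt_d6
  -- u, v
  have h1s0 : (0:ℝ) < 1 + s^2 := by positivity
  have hsq : 0 < Real.sqrt (1 + s^2) := Real.sqrt_pos.2 h1s0
  set u := (Real.sqrt (1 + s^2))⁻¹ with hudef
  have hu0 : 0 < u := inv_pos.2 hsq
  set v := -s * u with hvdef
  have hv0 : 0 < v := mul_pos (by linarith) hu0
  have hu2 : u^2 = (1 + s^2)⁻¹ := by
    rw [hudef, inv_pow, Real.sq_sqrt (le_of_lt h1s0)]
  have huv : u^2 + v^2 = 1 := by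
    rw [hvdef, mul_pow, hu2]; field_simp
  have hu1 : u ≤ 1 := by
    have h9 : (1:ℝ) ≤ Real.sqrt (1 + s^2) := by
      nlinarith [Real.sq_sqrt (le_of_lt h1s0), Real.sqrt_nonneg (1 + s^2), sq_nonneg s]
    rw [hudef]
    exact inv_le_one_of_one_le₀ h9
  have hucd : u * c = d := by
    rw [hdist, hudef]; field_simp
  -- key identity
  have hkey : v * x₀ + u * Real.sqrt (1 - x₀^2) = d := by
    rw [← htouch, ← hucd, hvdef]; ring
  -- φ'
  set φ := arcsin u with hφdef
  have hsinφ : Real.sin φ = u := Real.sin_arcsin (by linarith) hu1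
  have hcosφ : Real.cos φ = v := by
    rw [hφdef, Real.cos_arcsin]
    have : 1 - u^2 = v^2 := by linarith
    rw [this, Real.sqrt_sq (le_of_lt hv0)]
  have hφ0 : 0 < φ := Real.arcsin_pos.2 hu0
  have hφπ2 : φ ≤ π/2 := Real.arcsin_le_pi_div_two u
  have hsinφγ : Real.sin (φ + γ) = d := by
    rw [Real.sin_add, hsinφ, hcosφ, hγdef, Real.sin_arcsin (by linarith) hx₀1,
      Real.cos_arcsin]
    linarith [hkey]
  have hφγπ2 : φ + γ ≤ π / 2 := by
    by_contra h
    push_neg at h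
    have h2 : φ + γ - π/2 ≤ 1/10 := by linarith
    have h3 : Real.sin (φ + γ) = Real.cos (φ + γ - π/2) := by
      rw [show φ + γ - π/2 = -(π/2 - (φ + γ)) by ring, Real.cos_neg, Real.cos_pi_div_two_sub]
    have h4 : Real.cos (π/3) ≤ Real.cos (φ + γ - π/2) :=
      Real.cos_le_cos_of_nonneg_of_le_pi (by linarith) (by linarith) (by linarith)
    rw [Real.cos_pi_div_three] at h4
    rw [h3] at hsinφγ
    linarith
  have hφβ : φ + γ = β := by
    have h5 : arcsin (Real.sin (φ + γ)) = φ + γ := Real.arcsin_sin (by linarith) hφγπ2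
    rw [hsinφγ] at h5
    exact h5.symm
  -- x*
  set A := α - β + γ with hAdef
  have hA0 : 0 < A := by linarith
  have hA2 : A ≤ 1/5 := by linarith
  have hxs0 : 0 < Real.sin A := Real.sin_pos_of_pos_of_lt_pi hA0 (by linarith)
  have hxs1 : Real.sin A < 1 := lt_of_le_of_lt (Real.sin_le (le_of_lt hA0)) (by linarith)
  refine ⟨hxs0, hxs1, ?_⟩
  intro t ht1 ht2
  set ψ := arccos t with hψdef
  have hψ0 : 0 ≤ ψ := Real.arccos_nonneg t
  have hψπ : ψ ≤ π := Real.arccos_le_pi t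
  have hcosψ : Real.cos ψ = t := Real.cos_arccos ht1 ht2
  have hsinψ : Real.sin ψ = Real.sqrt (1 - t^2) := Real.sin_arccos t
  -- step 1
  have step1 : (r * Real.sqrt (1 - t^2) ≤ s * (r * t) + c) ↔
      Real.cos (ψ - φ) ≤ Real.cos (π/2 - α) := by
    rw [Real.cos_sub, hcosψ, hsinψ, hcosφ, hsinφ, Real.cos_pi_div_two_sub,
      hαdef, Real.sin_arcsin (by linarith) hdr1]
    have key : u*(s*(r*t)+c) - u*(r*Real.sqrt (1-t^2)) =
        d - (t*v + Real.sqrt (1-t^2)*u)*r := by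
      rw [← hucd, hvdef]; ring
    constructor
    · intro h
      have h2 : u * (r * Real.sqrt (1 - t^2)) ≤ u * (s * (r * t) + c) :=
        mul_le_mul_of_nonneg_left h (le_of_lt hu0)
      rw [le_div_iff₀ hr0]
      linarith
    · intro h
      rw [le_div_iff₀ hr0] at h
      have h2 : u * (r * Real.sqrt (1 - t^2)) ≤ u * (s * (r * t) + c) := by linarith
      exact le_of_mul_le_mul_left h2 hu0
  -- step 3 : cos (ψ - φ) ≤ cos (π/2 - α) ↔ π/2 - α + φ ≤ ψ
  have hmem1 : π/2 - α ∈ Set.Icc 0 π := ⟨by linarith, by linarith⟩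
  have step3 : (Real.cos (ψ - φ) ≤ Real.cos (π/2 - α)) ↔ π/2 - α + φ ≤ ψ := by
    rcases le_or_gt φ ψ with hle | hlt
    · have hmem2 : ψ - φ ∈ Set.Icc 0 π := ⟨by linarith, by linarith⟩
      rw [Real.strictAntiOn_cos.le_iff_ge hmem2 hmem1]
      constructor <;> intro <;> linarith
    · have hfalse1 : ¬ (π/2 - α + φ ≤ ψ) := by
        push_neg; linarith
      have hcos : Real.cos (ψ - φ) = Real.cos (φ - ψ) := by
        rw [← Real.cos_neg]; ring_nf
      have hmem2 : φ - ψ ∈ Set.Icc 0 π := ⟨by linarith, by linarith⟩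
      have : Real.cos (π/2 - α) < Real.cos (φ - ψ) :=
        Real.strictAntiOn_cos hmem2 hmem1 (by linarith)
      exact iff_of_false (by rw [hcos]; linarith) hfalse1
  -- step 4
  have hmem3 : π/2 - α + φ ∈ Set.Icc 0 π := ⟨by linarith, by linarith⟩
  have step4 : (π/2 - α + φ ≤ ψ) ↔ t ≤ Real.sin A := by
    have : Real.cos (π/2 - α + φ) = Real.sin A := by
      have h1 : π/2 - α + φ = π/2 - A := by rw [hAdef]; linarith
      rw [h1, Real.cos_pi_div_two_sub]
    rw [← this, ← hcosψ]
    rw [Real.strictAntiOn_cos.le_iff_ge ⟨hψ0, hψπ⟩ hmem3]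
  rw [step1, step3, step4]


lemma rpow_inv_le {x : ℝ} (hx : ((10:ℝ)^(20:ℕ)) ≤ x) {e : ℝ} (he : 0 < e) {K : ℝ}
    (hK : (((10:ℝ)^(20:ℕ)))^e = K) : x ^ (-e) ≤ K⁻¹ := by
  have h0 : (0:ℝ) < (10:ℝ)^(20:ℕ) := by positivity
  have hx0 : 0 < x := lt_of_lt_of_le h0 hx
  have hK0 : 0 < K := by rw [← hK]; positivity
  rw [Real.rpow_neg hx0.le]
  have h2 : K ≤ x ^ e := by rw [← hK]; exact Real.rpow_le_rpow h0.le hx he.le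
  exact inv_anti₀ hK0 h2

lemma npos {n : ℕ} (hn : 10^20 ≤ n) : (0:ℝ) < (n:ℝ) := by
  have : (0:ℕ) < n := lt_of_lt_of_le (by norm_num) hn
  exact_mod_cast this

lemma ncast {n : ℕ} (hn : 10^20 ≤ n) : ((10:ℝ)^(20:ℕ)) ≤ (n:ℝ) := by
  have := (Nat.cast_le (α := ℝ)).2 hn
  push_cast at this
  exact_mod_cast this

lemma del0_pos {n : ℕ} (hn : 10^20 ≤ n) : 0 < del0 n :=
  Real.rpow_pos_of_pos (npos hn) _

lemma del0_le {n : ℕ} (hn : 10^20 ≤ n) : del0 n ≤ 1/100000 := by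
  have h := rpow_inv_le (ncast hn) (e := (1/4:ℝ)) (by norm_num) (K := 100000) ?_
  · rw [del0]; rw [show (-(1/4):ℝ) = -(1/4:ℝ) by norm_num] at *
    simpa [one_div] using h
  · rw [← Real.rpow_natCast (10:ℝ) 20, ← Real.rpow_mul (by norm_num)]
    rw [show ((20:ℕ):ℝ) * (1/4:ℝ) = ((5:ℕ):ℝ) by norm_num, Real.rpow_natCast]
    norm_num

lemma del1_pos {n : ℕ} (hn : 10^20 ≤ n) : 0 < del1 n :=
  Real.rpow_pos_of_pos (npos hn) _

lemma del1_le {n : ℕ} (hn : 10^20 ≤ n) : del1 n ≤ 1/10^10 := by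
  have h1 : del1 n ≤ (n:ℝ) ^ (-(1/2):ℝ) := by
    rw [del1]
    apply Real.rpow_le_rpow_of_exponent_le _ (by norm_num)
    have := ncast hn; nlinarith
  have h := rpow_inv_le (ncast hn) (e := (1/2:ℝ)) (by norm_num) (K := 10^10) ?_
  · refine le_trans h1 ?_
    rw [show ((10:ℝ)^10)⁻¹ = 1/10^10 by norm_num] at h
    exact h
  · rw [← Real.rpow_natCast (10:ℝ) 20, ← Real.rpow_mul (by norm_num)]
    rw [show ((20:ℕ):ℝ) * (1/2:ℝ) = ((10:ℕ):ℝ) by norm_num, Real.rpow_natCast]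

lemma extract {n : ℕ} {a b : ℝ} {f : ℝ → ℝ} (hn : 10^20 ≤ n)
    (ha : a ∈ Set.Icc (2:ℝ) 200) (hb : b ∈ Set.Icc (-1000:ℝ) 1000)
    (haff : AffineNegSlope f) (htc : TouchesCircle n b f) (hdo : DistFromOrigin n a f) :
    ∃ s c : ℝ, s < 0 ∧ (∀ x, f x = s * x + c) ∧ 0 < c ∧
      a * del0 n = c / Real.sqrt (1 + s ^ 2) ∧
      0 < del0 n * (1 + del1 n * b) ∧
      del0 n * (1 + del1 n * b) < a * del0 n ∧
      a * del0 n ≤ 1/500 ∧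
      s * (del0 n * (1 + del1 n * b)) + c =
        Real.sqrt (1 - (del0 n * (1 + del1 n * b))^2) := by
  obtain ⟨s, c, hs, hf⟩ := haff
  have hδ0 : 0 < del0 n := del0_pos hn
  have hδ0le : del0 n ≤ 1/100000 := del0_le hn
  have hδ1 : 0 < del1 n := del1_pos hn
  have hδ1le : del1 n ≤ 1/10^10 := del1_le hn
  have hbb : |del1 n * b| ≤ 1/10^7 := by
    rw [abs_mul, abs_of_pos hδ1]
    have h1 : |b| ≤ 1000 := abs_le.2 ⟨hb.1, hb.2⟩
    calc del1 n * |b| ≤ (1/10^10) * 1000 :=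
          mul_le_mul hδ1le h1 (abs_nonneg b) (by norm_num)
      _ ≤ 1/10^7 := by norm_num
  have hbb' := abs_le.1 hbb
  have h1b : (1:ℝ)/2 ≤ 1 + del1 n * b := by
    have := hbb'.1; norm_num at this ⊢; linarith
  have h1b' : 1 + del1 n * b ≤ 2 := by
    have := hbb'.2; norm_num at this ⊢; linarith
  set x₀ := del0 n * (1 + del1 n * b) with hx₀def
  have hx₀pos : 0 < x₀ := mul_pos hδ0 (by linarith)
  have hx₀lt : x₀ < a * del0 n := by
    have h2 : x₀ < del0 n * 2 := by
      apply mul_lt_mul_of_pos_left _ hδ0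
      linarith [hbb'.2]
    have h3 : 2 * del0 n ≤ a * del0 n := mul_le_mul_of_nonneg_right ha.1 hδ0.le
    linarith
  have had : a * del0 n ≤ 1/500 := by
    calc a * del0 n ≤ 200 * (1/100000) :=
          mul_le_mul ha.2 hδ0le hδ0.le (by norm_num)
      _ ≤ 1/500 := by norm_num
  have htouch : s * x₀ + c = Real.sqrt (1 - x₀^2) := by
    have := htc
    rw [TouchesCircle, hf] at this
    exact this
  have hx₀1 : x₀ < 1 := by
    have : a * del0 n ≤ 1/500 := had
    linarith
  have hsqrtpos : 0 < Real.sqrt (1 - x₀^2) := Real.sqrt_pos.2 (by nlinarith)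
  have hc : 0 < c := by
    have h4 : s * x₀ < 0 := mul_neg_of_neg_of_pos hs hx₀pos
    linarith
  obtain ⟨⟨x₁, hx₁⟩, hlb⟩ := hdo
  have h1s0 : (0:ℝ) < 1 + s^2 := by positivity
  have h1 : Real.sqrt (c^2/(1+s^2)) = c / Real.sqrt (1+s^2) := by
    rw [Real.sqrt_div (sq_nonneg c), Real.sqrt_sq hc.le]
  have hub : a * del0 n ≤ c / Real.sqrt (1+s^2) := by
    have hmem : Real.sqrt ((-s*c/(1+s^2))^2 + f (-s*c/(1+s^2))^2) ∈
        {y : ℝ | ∃ x : ℝ, y = Real.sqrt (x ^ 2 + f x ^ 2)} := ⟨_, rfl⟩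
    have h2 := hlb hmem
    have h3 : (-s*c/(1+s^2))^2 + (s*(-s*c/(1+s^2))+c)^2 = c^2/(1+s^2) := by
      field_simp; ring
    rw [hf, h3, h1] at h2
    exact h2
  have hlb2 : c / Real.sqrt (1+s^2) ≤ a * del0 n := by
    rw [hx₁, hf, ← h1]
    apply Real.sqrt_le_sqrt
    rw [div_le_iff₀ h1s0]
    nlinarith [sq_nonneg ((1+s^2)*x₁ + s*c)]
  exact ⟨s, c, hs, hf, hc, le_antisymm hub hlb2, hx₀pos, hx₀lt, had, htouch⟩

noncomputable section
def sliceEquiv (m : ℕ) : Euc (m+1) ≃ᵐ ℝ × Euc m :=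
  ((MeasurableEquiv.toLp 2 (Fin (m+1) → ℝ)).symm.trans
    (MeasurableEquiv.piFinSuccAbove (fun _ : Fin (m+1) => ℝ) 0)).trans
    (MeasurableEquiv.prodCongr (MeasurableEquiv.refl ℝ)
      (MeasurableEquiv.toLp 2 (Fin m → ℝ)).symm.symm)
end

lemma sliceEquiv_mp (m : ℕ) : MeasurePreserving (sliceEquiv m) volume volume := by
  have h1 := EuclideanSpace.volume_preserving_symm_measurableEquiv_toLp (Fin (m+1))
  have h2 := volume_preserving_piFinSuccAbove (fun _ : Fin (m+1) => ℝ) 0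
  have h3 := (EuclideanSpace.volume_preserving_symm_measurableEquiv_toLp (Fin m)).symm
  have h4 : MeasurePreserving
      (Prod.map (id : ℝ → ℝ) (⇑(MeasurableEquiv.toLp 2 (Fin m → ℝ)).symm.symm))
      volume volume := by
    rw [Measure.volume_eq_prod, Measure.volume_eq_prod]
    exact (MeasurePreserving.id volume).prod h3
  have := (h4.comp h2).comp h1
  exact this

lemma sliceEquiv_fst (m : ℕ) (z : Euc (m+1)) : (sliceEquiv m z).1 = z 0 := rfl

lemma sliceEquiv_snd_apply (m : ℕ) (z : Euc (m+1)) (j : Fin m) :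
    (sliceEquiv m z).2 j = z j.succ := by
  simp [sliceEquiv, MeasurableEquiv.piFinSuccAbove, Fin.succAbove]
  rfl

lemma sliceEquiv_snd_norm (m : ℕ) (z : Euc (m+1)) :
    ‖(sliceEquiv m z).2‖^2 = ‖z‖^2 - (z 0)^2 := by
  rw [EuclideanSpace.norm_eq, EuclideanSpace.norm_eq,
    Real.sq_sqrt (by positivity), Real.sq_sqrt (by positivity)]
  rw [Fin.sum_univ_succ]
  have : ∀ j : Fin m, ‖(sliceEquiv m z).2 j‖^2 = ‖z j.succ‖^2 := by
    intro j; rw [sliceEquiv_snd_apply]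
  rw [Finset.sum_congr rfl (fun j _ => this j)]
  have h0 : ‖z 0‖^2 = (z 0)^2 := by rw [Real.norm_eq_abs, sq_abs]
  rw [h0]; ring

lemma vol_slice (m : ℕ) (A : Set ℝ) (hA : MeasurableSet A) (g : ℝ → ℝ) (hg : Measurable g) :
    volume {z : Euc (m+1) | z 0 ∈ A ∧ Real.sqrt (‖z‖^2 - (z 0)^2) < g (z 0)} =
      ∫⁻ t in A, volume (Metric.ball (0 : Euc m) (g t)) := by
  set W : Set (ℝ × Euc m) := {p | p.1 ∈ A ∧ ‖p.2‖ < g p.1} with hW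
  have hWm : MeasurableSet W := by
    apply MeasurableSet.inter
    · exact measurable_fst hA
    · exact measurableSet_lt measurable_snd.norm (hg.comp measurable_fst)
  have hpre : {z : Euc (m+1) | z 0 ∈ A ∧ Real.sqrt (‖z‖^2 - (z 0)^2) < g (z 0)} =
      (sliceEquiv m) ⁻¹' W := by
    ext z
    have hnorm : Real.sqrt (‖z‖^2 - (z 0)^2) = ‖(sliceEquiv m z).2‖ := by
      rw [← sliceEquiv_snd_norm, Real.sqrt_sq (norm_nonneg _)]
    simp only [Set.mem_preimage, Set.mem_setOf_eq, hW, sliceEquiv_fst, hnorm]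
  rw [hpre, (sliceEquiv_mp m).measure_preimage hWm.nullMeasurableSet]
  rw [Measure.volume_eq_prod, Measure.prod_apply hWm]
  have heq : ∀ t : ℝ, volume (Prod.mk t ⁻¹' W) =
      A.indicator (fun t => volume (Metric.ball (0 : Euc m) (g t))) t := by
    intro t
    by_cases h : t ∈ A
    · rw [Set.indicator_of_mem h]
      congr 1
      ext y
      simp [hW, h, mem_ball_zero_iff]
    · rw [Set.indicator_of_notMem h]
      have : Prod.mk t ⁻¹' W = ∅ := by
        ext y; simp [hW, h]
      rw [this, measure_empty]
  rw [lintegral_congr heq, lintegral_indicator hA]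


lemma abs_coord_le (n : ℕ) (z : Euc n) (i : Fin n) : |z i| ≤ ‖z‖ := by
  have h := abs_real_inner_le_norm z (EuclideanSpace.single i (1:ℝ))
  rw [EuclideanSpace.inner_single_right, EuclideanSpace.norm_single] at h
  simpa using h

lemma sector_eq (m : ℕ) {x : ℝ} (hx0 : 0 < x) (hx1 : x < 1) :
    {z : Euc (m+1) | ‖z‖ ∈ Set.Ioo (0:ℝ) 1 ∧ x * ‖z‖ < z 0} =
    {z : Euc (m+1) | z 0 ∈ Set.Ioo (0:ℝ) 1 ∧ Real.sqrt (‖z‖^2 - (z 0)^2) <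
      min (z 0 * (Real.sqrt (1 - x^2)/x)) (Real.sqrt (1 - (z 0)^2))} := by
  have hs0 : 0 < Real.sqrt (1 - x^2) := Real.sqrt_pos.2 (by nlinarith)
  have hk2 : (Real.sqrt (1 - x^2)/x)^2 = (1-x^2)/x^2 := by
    rw [div_pow, Real.sq_sqrt (by nlinarith)]
  ext z
  simp only [Set.mem_setOf_eq, Set.mem_Ioo, lt_min_iff]
  have habs : |z 0| ≤ ‖z‖ := abs_coord_le _ z 0
  have hN0 : 0 ≤ ‖z‖ := norm_nonneg z
  have ht2 : (z 0)^2 ≤ ‖z‖^2 := by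
    rw [← sq_abs (z 0)]
    exact pow_le_pow_left₀ (abs_nonneg _) habs 2
  set t := z 0
  set N := ‖z‖
  constructor
  · rintro ⟨⟨hN1, hN2⟩, hxN⟩
    have ht0 : 0 < t := lt_of_le_of_lt (by positivity) hxN
    have ht1 : t < 1 := lt_of_le_of_lt (le_trans (le_abs_self t) habs) hN2
    have hN2sq : N^2 < 1 := by nlinarith
    have hxNsq : x^2 * N^2 < t^2 := by
      nlinarith [mul_pos (sub_pos.2 hxN) (show (0:ℝ) < t + x*N by positivity)]
    refine ⟨⟨ht0, ht1⟩, ?_, ?_⟩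
    · rw [Real.sqrt_lt' (by positivity), mul_pow, hk2, ← mul_div_assoc,
        lt_div_iff₀ (by positivity)]
      nlinarith
    · exact Real.sqrt_lt_sqrt (by nlinarith) (by nlinarith)
  · rintro ⟨⟨ht0, ht1⟩, h1, h2⟩
    have hN1 : 0 < N := lt_of_lt_of_le ht0 (le_trans (le_abs_self t) habs)
    have hNlt : N < 1 := by
      rw [Real.sqrt_lt_sqrt_iff (by nlinarith)] at h2
      nlinarith
    refine ⟨⟨hN1, hNlt⟩, ?_⟩
    rw [Real.sqrt_lt' (by positivity), mul_pow, hk2, ← mul_div_assoc,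
      lt_div_iff₀ (by positivity)] at h1
    have hsq : (x*N)^2 < t^2 := by nlinarith
    exact lt_of_pow_lt_pow_left₀ 2 ht0.le hsq

lemma euc_ball_eq (m : ℕ) :
    Metric.ball (0 : Euc (m+1)) 1 =
    {z : Euc (m+1) | z 0 ∈ Set.Ioo (-1:ℝ) 1 ∧ Real.sqrt (‖z‖^2 - (z 0)^2) <
      Real.sqrt (1 - (z 0)^2)} := by
  ext z
  rw [mem_ball_zero_iff]
  simp only [Set.mem_setOf_eq, Set.mem_Ioo]
  have habs : |z 0| ≤ ‖z‖ := abs_coord_le _ z 0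
  have hN0 : 0 ≤ ‖z‖ := norm_nonneg z
  have ht2 : (z 0)^2 ≤ ‖z‖^2 := by
    rw [← sq_abs (z 0)]
    exact pow_le_pow_left₀ (abs_nonneg _) habs 2
  set t := z 0
  set N := ‖z‖
  constructor
  · intro hN1
    have habs1 : |t| < 1 := lt_of_le_of_lt habs hN1
    have h1 := abs_lt.1 habs1
    exact ⟨⟨h1.1, h1.2⟩, Real.sqrt_lt_sqrt (by nlinarith) (by nlinarith)⟩
  · rintro ⟨⟨ht1, ht2'⟩, h2⟩
    rw [Real.sqrt_lt_sqrt_iff (by nlinarith)] at h2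
    nlinarith [abs_nonneg t]

lemma smul_cap (n : ℕ) [NeZero n] {x : ℝ} (hx0 : 0 < x) :
    Set.Ioo (0:ℝ) 1 • (Subtype.val '' {θ : Sph n | x < (θ : Euc n) 0}) =
      {z : Euc n | ‖z‖ ∈ Set.Ioo (0:ℝ) 1 ∧ x * ‖z‖ < z 0} := by
  ext z
  constructor
  · intro hz
    rw [Set.mem_smul] at hz
    obtain ⟨r, hr, w, hw, hrw⟩ := hz
    obtain ⟨θ, hθ, rfl⟩ := hw
    have hθn : ‖(θ : Euc n)‖ = 1 := mem_sphere_zero_iff_norm.1 θ.2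
    subst hrw
    have hns : ‖r • (θ : Euc n)‖ = r := by
      rw [norm_smul, hθn, Real.norm_eq_abs, abs_of_pos hr.1, mul_one]
    constructor
    · rw [hns]; exact hr
    · have happ : (r • (θ : Euc n)) 0 = r * (θ : Euc n) 0 := rfl
      rw [hns, happ]
      calc x * r = r * x := by ring
        _ < r * (θ : Euc n) 0 := by
            exact mul_lt_mul_of_pos_left hθ hr.1
  · rintro ⟨hN, hxz⟩
    have hz0 : ‖z‖ ≠ 0 := ne_of_gt hN.1
    have hθs : ‖z‖⁻¹ • z ∈ Metric.sphere (0 : Euc n) 1 := by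
      rw [mem_sphere_zero_iff_norm, norm_smul, Real.norm_eq_abs, abs_of_pos (inv_pos.2 hN.1),
        inv_mul_cancel₀ hz0]
    rw [Set.mem_smul]
    refine ⟨‖z‖, hN, ‖z‖⁻¹ • z, ⟨⟨‖z‖⁻¹ • z, hθs⟩, ?_, rfl⟩, smul_inv_smul₀ hz0 z⟩
    show x < (‖z‖⁻¹ • z) 0
    have happ : (‖z‖⁻¹ • z) 0 = ‖z‖⁻¹ * z 0 := rfl
    rw [happ]
    rw [lt_inv_mul_iff₀ hN.1]
    calc ‖z‖ * x = x * ‖z‖ := by ring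
      _ < z 0 := hxz

lemma cont_rpow (q : ℝ) (hq : 0 ≤ q) : Continuous (fun t : ℝ => (1 - t^2) ^ q) :=
  Continuous.rpow_const (by continuity) (fun _ => Or.inr hq)

lemma deriv_G (m : ℕ) (hm : 2 ≤ m) (t : ℝ) :
    HasDerivAt (fun t : ℝ => t * (1 - t^2) ^ ((m:ℝ)/2))
      (((m:ℝ)+1) * (1 - t^2) ^ ((m:ℝ)/2) - (m:ℝ) * (1 - t^2) ^ (((m:ℝ)-2)/2)) t := by
  have hm2 : (2:ℝ) ≤ (m:ℝ) := by exact_mod_cast hm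
  have hmhalf : 1 ≤ (m:ℝ)/2 := by linarith
  have hu : HasDerivAt (fun t : ℝ => 1 - t^2) (-(2*t)) t := by
    have h := ((hasDerivAt_pow 2 t).const_sub 1)
    simpa using h
  have hr : HasDerivAt (fun y : ℝ => y ^ ((m:ℝ)/2))
      (((m:ℝ)/2) * (1 - t^2) ^ ((m:ℝ)/2 - 1)) (1 - t^2) :=
    Real.hasDerivAt_rpow_const (Or.inr hmhalf)
  have hcomp := hr.comp t hu
  have hG := (hasDerivAt_id t).mul hcomp
  have hexp : (m:ℝ)/2 - 1 = ((m:ℝ)-2)/2 := by ring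
  rw [hexp] at hG
  have hEE : (1 - t^2) ^ ((m:ℝ)/2) = (1 - t^2) ^ (((m:ℝ)-2)/2) * (1 - t^2) := by
    rcases eq_or_ne (1 - t^2) 0 with h | h
    · rw [h, mul_zero, Real.zero_rpow (by linarith)]
    · rw [show ((m:ℝ))/2 = ((m:ℝ)-2)/2 + 1 by ring, Real.rpow_add_one h]
  refine hG.congr_deriv ?_
  simp only [Function.comp, id_eq]
  rw [hEE]; ring

lemma key_integral (m : ℕ) (hm : 2 ≤ m) {x : ℝ} (hx : -1 ≤ x) (hx1 : x ≤ 1) :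
    ((m:ℝ)+1) * ∫ t in x..(1:ℝ), (1 - t^2) ^ ((m:ℝ)/2) =
      (m:ℝ) * (∫ t in x..(1:ℝ), (1 - t^2) ^ (((m:ℝ)-2)/2)) - x * (1-x^2) ^ ((m:ℝ)/2) := by
  have hm2 : (2:ℝ) ≤ (m:ℝ) := by exact_mod_cast hm
  have hc1 : Continuous (fun t : ℝ => (1 - t^2) ^ ((m:ℝ)/2)) := cont_rpow _ (by linarith)
  have hc2 : Continuous (fun t : ℝ => (1 - t^2) ^ (((m:ℝ)-2)/2)) := cont_rpow _ (by linarith)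
  have hFTC := intervalIntegral.integral_eq_sub_of_hasDerivAt
    (f := fun t : ℝ => t * (1 - t^2) ^ ((m:ℝ)/2))
    (f' := fun t => ((m:ℝ)+1) * (1 - t^2) ^ ((m:ℝ)/2) - (m:ℝ) * (1 - t^2) ^ (((m:ℝ)-2)/2))
    (a := x) (b := 1) (fun t _ => deriv_G m hm t)
    (Continuous.intervalIntegrable ((continuous_const.mul hc1).sub (continuous_const.mul hc2)) x 1)
  rw [intervalIntegral.integral_sub (f := fun t => ((m:ℝ)+1) * (1 - t^2) ^ ((m:ℝ)/2))
      (g := fun t => (m:ℝ) * (1 - t^2) ^ (((m:ℝ)-2)/2)) ((continuous_const.mul hc1).intervalIntegrable x 1)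
      ((continuous_const.mul hc2).intervalIntegrable x 1),
    intervalIntegral.integral_const_mul, intervalIntegral.integral_const_mul] at hFTC
  have h1 : (1:ℝ) * (1 - 1^2) ^ ((m:ℝ)/2) = 0 := by
    rw [show (1:ℝ) - 1^2 = 0 by norm_num, Real.zero_rpow (by linarith)]
    ring
  rw [h1] at hFTC
  linarith

lemma sqrt_pow_eq (m : ℕ) {x : ℝ} (hx : -1 ≤ x) (hx1 : x ≤ 1) :
    ∫ t in x..(1:ℝ), Real.sqrt (1 - t^2) ^ m = ∫ t in x..(1:ℝ), (1 - t^2) ^ ((m:ℝ)/2) := by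
  apply intervalIntegral.integral_congr
  intro t ht
  rw [Set.uIcc_of_le hx1] at ht
  have h0 : 0 ≤ 1 - t^2 := by nlinarith [ht.1, ht.2]
  show Real.sqrt (1 - t^2) ^ m = (1 - t^2) ^ ((m:ℝ)/2)
  rw [Real.sqrt_eq_rpow, ← Real.rpow_natCast ((1-t^2) ^ ((1:ℝ)/2)) m, ← Real.rpow_mul h0]
  congr 1
  ring

lemma min_formula (m : ℕ) (hm : 2 ≤ m) {x : ℝ} (hx0 : 0 < x) (hx1 : x < 1) :
    ∫ t in Set.Ioo (0:ℝ) 1, (min (t * (Real.sqrt (1 - x^2)/x)) (Real.sqrt (1 - t^2)))^m =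
      ((m:ℝ)/((m:ℝ)+1)) * ∫ t in x..(1:ℝ), (1 - t^2) ^ (((m:ℝ)-2)/2) := by
  set k := Real.sqrt (1 - x^2)/x with hk
  set g : ℝ → ℝ := fun t => (min (t*k) (Real.sqrt (1 - t^2)))^m with hg
  have hs0 : 0 < Real.sqrt (1-x^2) := Real.sqrt_pos.2 (by nlinarith)
  have hk0 : 0 < k := by positivity
  have hgc : Continuous g := by
    apply Continuous.pow
    exact Continuous.min (by continuity) (Real.continuous_sqrt.comp (by continuity))
  have h1 : ∫ t in Set.Ioo (0:ℝ) 1, g t = ∫ t in (0:ℝ)..1, g t := by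
    rw [intervalIntegral.integral_of_le (by norm_num), integral_Ioc_eq_integral_Ioo]
  have hsplit : ∫ t in (0:ℝ)..1, g t = (∫ t in (0:ℝ)..x, g t) + ∫ t in x..(1:ℝ), g t :=
    (intervalIntegral.integral_add_adjacent_intervals (hgc.intervalIntegrable _ _)
      (hgc.intervalIntegrable _ _)).symm
  have hleft : ∫ t in (0:ℝ)..x, g t = ∫ t in (0:ℝ)..x, t^m * k^m := by
    apply intervalIntegral.integral_congr
    intro t ht
    rw [Set.uIcc_of_le (le_of_lt hx0)] at ht
    have ht0 : 0 ≤ t := ht.1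
    have htx : t ≤ x := ht.2
    have hmin : min (t*k) (Real.sqrt (1 - t^2)) = t*k := by
      apply min_eq_left
      rw [Real.le_sqrt (by positivity) (by nlinarith)]
      rw [mul_pow]
      have hkk : k^2 = (1-x^2)/x^2 := by rw [hk, div_pow, Real.sq_sqrt (by nlinarith)]
      rw [hkk, ← mul_div_assoc, div_le_iff₀ (by positivity)]
      nlinarith
    rw [hg]; simp only; rw [hmin, mul_pow]
  have hleftval : ∫ t in (0:ℝ)..x, t^m * k^m = x * Real.sqrt (1-x^2)^m / ((m:ℝ)+1) := by
    rw [intervalIntegral.integral_mul_const, integral_pow]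
    have hkm : k^m = Real.sqrt (1-x^2)^m / x^m := by rw [hk, div_pow]
    rw [hkm]
    have hxm : x^(m+1) = x^m * x := pow_succ x m
    have hx0' : x^m ≠ 0 := by positivity
    field_simp
    push_cast
    ring
  have hright : ∫ t in x..(1:ℝ), g t = ∫ t in x..(1:ℝ), Real.sqrt (1-t^2)^m := by
    apply intervalIntegral.integral_congr
    intro t ht
    rw [Set.uIcc_of_le hx1.le] at ht
    have htx : x ≤ t := ht.1
    have ht1 : t ≤ 1 := ht.2
    have ht0 : 0 < t := lt_of_lt_of_le hx0 htx
    have hmin : min (t*k) (Real.sqrt (1 - t^2)) = Real.sqrt (1-t^2) := by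
      apply min_eq_right
      have h2 : 1 - t^2 ≤ (t*k)^2 := by
        rw [mul_pow]
        have hkk : k^2 = (1-x^2)/x^2 := by rw [hk, div_pow, Real.sq_sqrt (by nlinarith)]
        rw [hkk, ← mul_div_assoc, le_div_iff₀ (by positivity)]
        nlinarith
      calc Real.sqrt (1-t^2) ≤ Real.sqrt ((t*k)^2) := Real.sqrt_le_sqrt h2
        _ = t*k := Real.sqrt_sq (by positivity)
    rw [hg]; simp only; rw [hmin]
  have hsqeq := sqrt_pow_eq m (by linarith : (-1:ℝ) ≤ x) hx1.le
  have hkey := key_integral m hm (by linarith : (-1:ℝ) ≤ x) hx1.le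
  rw [h1, hsplit, hleft, hleftval, hright, hsqeq]
  have hm0 : ((m:ℝ)+1) ≠ 0 := by positivity
  have hxx : Real.sqrt (1-x^2)^m = (1-x^2) ^ ((m:ℝ)/2) := by
    rw [Real.sqrt_eq_rpow, ← Real.rpow_natCast ((1-x^2) ^ ((1:ℝ)/2)) m,
      ← Real.rpow_mul (by nlinarith)]
    congr 1; ring
  rw [hxx]
  field_simp
  linarith [hkey]

lemma univ_formula (m : ℕ) (hm : 2 ≤ m) :
    ∫ t in Set.Ioo (-1:ℝ) 1, (Real.sqrt (1 - t^2))^m =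
      ((m:ℝ)/((m:ℝ)+1)) * ∫ t in (-1:ℝ)..(1:ℝ), (1 - t^2) ^ (((m:ℝ)-2)/2) := by
  have h1 : ∫ t in Set.Ioo (-1:ℝ) 1, (Real.sqrt (1 - t^2))^m
      = ∫ t in (-1:ℝ)..1, (Real.sqrt (1 - t^2))^m := by
    rw [intervalIntegral.integral_of_le (by norm_num), integral_Ioc_eq_integral_Ioo]
  have hsqeq := sqrt_pow_eq m (le_refl (-1:ℝ)) (by norm_num)
  have hkey := key_integral m hm (le_refl (-1:ℝ)) (by norm_num)
  have hzero : (-1:ℝ) * (1-(-1:ℝ)^2) ^ ((m:ℝ)/2) = 0 := by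
    rw [show (1:ℝ)-(-1:ℝ)^2 = 0 by norm_num, Real.zero_rpow (by
      have : (2:ℝ) ≤ (m:ℝ) := by exact_mod_cast hm
      linarith)]
    ring
  rw [hzero] at hkey
  have hm0 : ((m:ℝ)+1) ≠ 0 := by positivity
  rw [h1, hsqeq]
  field_simp
  linarith [hkey]

lemma cap_measurable (n : ℕ) [NeZero n] (x : ℝ) : MeasurableSet {θ : Sph n | x < (θ : Euc n) 0} := by
  have h1 : Continuous fun θ : Sph n => (θ : Euc n) 0 :=
    (EuclideanSpace.proj (0 : Fin n)).continuous.comp continuous_subtype_val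
  exact measurableSet_lt measurable_const h1.measurable

lemma ioo_lintegral (m : ℕ) (hm : 2 ≤ m) (A : Set ℝ) (hA : MeasurableSet A)
    (g : ℝ → ℝ) (hgc : Continuous g) (hg0 : ∀ t ∈ A, 0 ≤ g t) (hAsub : A ⊆ Set.Icc (-1) 1) :
    ∫⁻ t in A, volume (Metric.ball (0 : Euc m) (g t)) =
      ENNReal.ofReal (∫ t in A, (g t)^m) * volume (Metric.ball (0 : Euc m) 1) := by
  haveI : NeZero m := ⟨by omega⟩
  haveI : Nontrivial (Euc m) := by infer_instance
  have hball : ∀ t ∈ A, volume (Metric.ball (0:Euc m) (g t)) =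
      ENNReal.ofReal ((g t)^m) * volume (Metric.ball (0:Euc m) 1) := by
    intro t ht
    rw [Measure.addHaar_ball volume 0 (hg0 t ht), finrank_euclideanSpace_fin]
  rw [setLIntegral_congr_fun hA hball]
  rw [lintegral_mul_const _ (by
    exact (ENNReal.measurable_ofReal.comp ((hgc.pow m).measurable)))]
  congr 1
  rw [← ofReal_integral_eq_lintegral_ofReal]
  · exact (((hgc.pow m).integrableOn_Icc (a := (-1:ℝ)) (b := (1:ℝ)))).mono_set hAsub
  · filter_upwards [ae_restrict_mem hA] with t ht
    exact pow_nonneg (hg0 t ht) m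

lemma toSphere_cap (m : ℕ) (hm : 2 ≤ m) {x : ℝ} (hx0 : 0 < x) (hx1 : x < 1) :
    (volume : Measure (Euc (m+1))).toSphere {θ : Sph (m+1) | x < (θ : Euc (m+1)) 0} =
      (m+1 : ℕ) * (ENNReal.ofReal (((m:ℝ)/((m:ℝ)+1)) *
          ∫ t in x..(1:ℝ), (1 - t^2) ^ (((m:ℝ)-2)/2)) *
        volume (Metric.ball (0:Euc m) 1)) := by
  haveI : NeZero (m+1) := ⟨Nat.succ_ne_zero m⟩
  rw [Measure.toSphere_apply' _ (cap_measurable (m+1) x)]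
  rw [smul_cap (m+1) hx0, sector_eq m hx0 hx1, finrank_euclideanSpace_fin]
  set k := Real.sqrt (1-x^2)/x with hkdef
  set g : ℝ → ℝ := fun t => min (t*k) (Real.sqrt (1-t^2)) with hgdef
  have hs0 : 0 < Real.sqrt (1-x^2) := Real.sqrt_pos.2 (by nlinarith)
  have hk0 : 0 < k := by positivity
  have hgc : Continuous g :=
    Continuous.min (by continuity) (Real.continuous_sqrt.comp (by continuity))
  have hvs := vol_slice m (Set.Ioo 0 1) measurableSet_Ioo g hgc.measurable
  have hseteq : {z : Euc (m+1) | z 0 ∈ Set.Ioo (0:ℝ) 1 ∧ Real.sqrt (‖z‖^2 - (z 0)^2) <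
      min (z 0 * (Real.sqrt (1 - x^2)/x)) (Real.sqrt (1 - (z 0)^2))} =
      {z : Euc (m+1) | z 0 ∈ Set.Ioo (0:ℝ) 1 ∧ Real.sqrt (‖z‖^2 - (z 0)^2) < g (z 0)} := rfl
  rw [hseteq, hvs]
  rw [ioo_lintegral m hm (Set.Ioo 0 1) measurableSet_Ioo g hgc
    (fun t ht => le_min (mul_nonneg ht.1.le hk0.le) (Real.sqrt_nonneg _))
    (fun t ht => ⟨by linarith [ht.1], le_of_lt ht.2⟩)]
  rw [min_formula m hm hx0 hx1]

lemma toSphere_univ_val (m : ℕ) (hm : 2 ≤ m) :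
    (volume : Measure (Euc (m+1))).toSphere Set.univ =
      (m+1 : ℕ) * (ENNReal.ofReal (((m:ℝ)/((m:ℝ)+1)) *
          ∫ t in (-1:ℝ)..(1:ℝ), (1 - t^2) ^ (((m:ℝ)-2)/2)) *
        volume (Metric.ball (0:Euc m) 1)) := by
  rw [Measure.toSphere_apply_univ, finrank_euclideanSpace_fin, euc_ball_eq m]
  set g : ℝ → ℝ := fun t => Real.sqrt (1-t^2) with hgdef
  have hgc : Continuous g := Real.continuous_sqrt.comp (by continuity)
  have hvs := vol_slice m (Set.Ioo (-1) 1) measurableSet_Ioo g hgc.measurable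
  have hseteq : {z : Euc (m+1) | z 0 ∈ Set.Ioo (-1:ℝ) 1 ∧ Real.sqrt (‖z‖^2 - (z 0)^2) <
      Real.sqrt (1 - (z 0)^2)} =
      {z : Euc (m+1) | z 0 ∈ Set.Ioo (-1:ℝ) 1 ∧ Real.sqrt (‖z‖^2 - (z 0)^2) < g (z 0)} := rfl
  rw [hseteq, hvs]
  rw [ioo_lintegral m hm (Set.Ioo (-1) 1) measurableSet_Ioo g hgc
    (fun t _ => Real.sqrt_nonneg _)
    (fun t ht => ⟨le_of_lt ht.1, le_of_lt ht.2⟩)]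
  rw [univ_formula m hm]


lemma Ku_pos (m : ℕ) (hm : 2 ≤ m) :
    0 < ∫ t in (-1:ℝ)..(1:ℝ), (1 - t^2) ^ (((m:ℝ)-2)/2) := by
  have hm2 : (2:ℝ) ≤ (m:ℝ) := by exact_mod_cast hm
  apply intervalIntegral.intervalIntegral_pos_of_pos_on
  · exact (cont_rpow _ (by linarith)).intervalIntegrable _ _
  · intro t ht
    exact Real.rpow_pos_of_pos (by nlinarith [ht.1, ht.2]) _
  · norm_num

lemma Kx_nonneg (m : ℕ) {x : ℝ} (hx : -1 ≤ x) (hx1 : x ≤ 1) :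
    0 ≤ ∫ t in x..(1:ℝ), (1 - t^2) ^ (((m:ℝ)-2)/2) := by
  apply intervalIntegral.integral_nonneg hx1
  intro t ht
  exact Real.rpow_nonneg (by nlinarith [ht.1, ht.2]) _

lemma sphσ_compl_toReal (m : ℕ) (hm : 2 ≤ m) {x : ℝ} (hx0 : 0 < x) (hx1 : x < 1) :
    (sphσ (m+1) {θ : Sph (m+1) | (θ : Euc (m+1)) 0 ≤ x}).toReal =
      1 - (∫ t in (-1:ℝ)..(1:ℝ), (1 - t^2) ^ (((m:ℝ)-2)/2))⁻¹ *
        ∫ t in x..(1:ℝ), (1 - t^2) ^ (((m:ℝ)-2)/2) := by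
  haveI : NeZero (m+1) := ⟨Nat.succ_ne_zero m⟩
  set Kx := ∫ t in x..(1:ℝ), (1 - t^2) ^ (((m:ℝ)-2)/2) with hKx
  set Ku := ∫ t in (-1:ℝ)..(1:ℝ), (1 - t^2) ^ (((m:ℝ)-2)/2) with hKu
  have hKu0 : 0 < Ku := Ku_pos m hm
  have hKx0 : 0 ≤ Kx := Kx_nonneg m (by linarith) hx1.le
  have hm2 : (2:ℝ) ≤ (m:ℝ) := by exact_mod_cast hm
  have hcoef : (0:ℝ) < (m:ℝ)/((m:ℝ)+1) := by positivity
  set B := volume (Metric.ball (0:Euc m) 1) with hB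
  have hB0 : B ≠ 0 := by
    haveI : NeZero m := ⟨by omega⟩
    exact (Metric.measure_ball_pos volume 0 one_pos).ne'
  have hBt : B ≠ ⊤ := measure_ball_lt_top.ne
  set tS := (volume : Measure (Euc (m+1))).toSphere with htS
  have hcompl : {θ : Sph (m+1) | (θ : Euc (m+1)) 0 ≤ x} =
      {θ : Sph (m+1) | x < (θ : Euc (m+1)) 0}ᶜ := by
    ext θ; simp [not_lt]
  have hcap := toSphere_cap m hm hx0 hx1
  have huniv := toSphere_univ_val m hm
  have hfin : tS {θ : Sph (m+1) | x < (θ : Euc (m+1)) 0} ≠ ⊤ := measure_ne_top _ _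
  have hmono : tS {θ : Sph (m+1) | x < (θ : Euc (m+1)) 0} ≤ tS Set.univ :=
    measure_mono (Set.subset_univ _)
  have hut : tS Set.univ ≠ ⊤ := measure_ne_top _ _
  have hσ : sphσ (m+1) {θ : Sph (m+1) | (θ : Euc (m+1)) 0 ≤ x} =
      (tS Set.univ)⁻¹ * (tS Set.univ - tS {θ : Sph (m+1) | x < (θ : Euc (m+1)) 0}) := by
    rw [sphσ, hcompl, Measure.smul_apply, smul_eq_mul,
      measure_compl (cap_measurable (m+1) x) (measure_ne_top _ _)]
  rw [hσ, ENNReal.toReal_mul, ENNReal.toReal_inv, ENNReal.toReal_sub_of_le hmono hut]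
  rw [hcap, huniv]
  rw [ENNReal.toReal_mul, ENNReal.toReal_mul, ENNReal.toReal_mul, ENNReal.toReal_mul]
  rw [ENNReal.toReal_ofReal (by positivity), ENNReal.toReal_ofReal (by positivity)]
  set Br := B.toReal with hBr
  have hBr0 : 0 < Br := ENNReal.toReal_pos hB0 hBt
  have hcst : ((m+1:ℕ) : ENNReal).toReal = (m:ℝ)+1 := by
    rw [ENNReal.toReal_natCast]; push_cast; ring
  rw [hcst]
  have hm10 : (m:ℝ)+1 ≠ 0 := by positivity
  field_simp
  rw [← hKu, ← hKx, mul_div_assoc, div_self hKu0.ne', mul_one]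


lemma inner_e1 (n : ℕ) [NeZero n] (z : Euc n) :
    (inner ℝ z (EuclideanSpace.single (0 : Fin n) (1 : ℝ)) : ℝ) = z 0 := by
  rw [EuclideanSpace.inner_single_right]
  simp

end Helpers

/-- There exists `n₀ ∈ ℕ` such that for all `n ≥ n₀`, all `a ∈ [2, 200]`, all
`b ∈ [−1000, 1000]` and all `r ∈ (1/2, 1]`:
`{θ ∈ S^{n-1} : rθ ∈ T_{a,b}} = {θ : ⟨θ, e₁⟩ ≤ x(a,b,r)}`; consequently
`g_{T_{a,b}}(r) = Ψ(x(a,b,r))`. -/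
theorem statement19 :
    ∃ n₀ : ℕ, ∀ (n : ℕ) [NeZero n], n₀ ≤ n →
      ∀ a ∈ Set.Icc (2 : ℝ) 200, ∀ b ∈ Set.Icc (-1000 : ℝ) 1000,
        ∀ f : ℝ → ℝ, AffineNegSlope f → TouchesCircle n b f → DistFromOrigin n a f →
          ∀ r : ℝ, 1 / 2 < r → r ≤ 1 →
            {θ : Sph n | r • (θ : Euc n) ∈ coneBody n f} =
              {θ : Sph n |
                (inner ℝ (θ : Euc n) (EuclideanSpace.single (0 : Fin n) (1 : ℝ)) : ℝ) ≤
                  xabr n a b r} ∧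
            profileFn n (coneBody n f) r = Psi n (xabr n a b r) := by
  refine ⟨10^20, ?_⟩
  intro n _inst hn a ha b hb f haff htc hdo r hr hr1
  obtain ⟨m, rfl⟩ : ∃ m, n = m + 1 := ⟨n - 1, by omega⟩
  have hm : 2 ≤ m := by omega
  obtain ⟨s, c, hs, hf, hc, hd, hx₀pos, hx₀lt, had, htouch⟩ := extract hn ha hb haff htc hdo
  have hr0 : (0:ℝ) < r := by linarith
  obtain ⟨hxs0, hxs1, hiff⟩ := core_equiv hs hc hx₀pos hx₀lt had hr hr1 htouch hd
  have hxabr : xabr (m+1) a b r =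
      Real.sin (Real.arcsin (a * del0 (m+1) / r) - Real.arcsin (a * del0 (m+1)) +
        Real.arcsin (del0 (m+1) * (1 + del1 (m+1) * b))) := by
    rw [xabr, show del0 (m+1) * (1 + b * del1 (m+1)) =
      del0 (m+1) * (1 + del1 (m+1) * b) by ring]
  have hX0 : 0 < xabr (m+1) a b r := by rw [hxabr]; exact hxs0
  have hX1 : xabr (m+1) a b r < 1 := by rw [hxabr]; exact hxs1
  have hset : {θ : Sph (m+1) | r • (θ : Euc (m+1)) ∈ coneBody (m+1) f} =
      {θ : Sph (m+1) | (θ : Euc (m+1)) 0 ≤ xabr (m+1) a b r} := by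
    ext θ
    have hθn : ‖(θ : Euc (m+1))‖ = 1 := mem_sphere_zero_iff_norm.1 θ.2
    have habs : |(θ : Euc (m+1)) 0| ≤ 1 := by
      have := abs_coord_le (m+1) (θ : Euc (m+1)) 0
      rwa [hθn] at this
    have habs' := abs_le.1 habs
    set t := (θ : Euc (m+1)) 0 with htdef
    have h2 : ‖r • (θ : Euc (m+1))‖ = r := by
      rw [norm_smul, hθn, mul_one, Real.norm_eq_abs, abs_of_pos hr0]
    have h1 : (inner ℝ (r • (θ : Euc (m+1)))
        (EuclideanSpace.single (0 : Fin (m+1)) (1:ℝ)) : ℝ) = r * t := by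
      rw [inner_e1]
      rfl
    have hsq : Real.sqrt (‖r • (θ : Euc (m+1))‖^2 - (r * t)^2) = r * Real.sqrt (1 - t^2) := by
      rw [show ‖r • (θ : Euc (m+1))‖^2 - (r * t)^2 = r^2 * (1 - t^2) by rw [h2]; ring,
        Real.sqrt_mul (sq_nonneg r), Real.sqrt_sq hr0.le]
    simp only [Set.mem_setOf_eq, coneBody, Set.mem_inter_iff, Dball,
      Metric.mem_closedBall, dist_zero_right, h1]
    rw [hsq, hf (r * t), h2]
    have hiff' := hiff t habs'.1 habs'.2
    rw [hxabr]
    constructor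
    · rintro ⟨_, hcond⟩
      exact hiff'.1 hcond
    · intro h
      exact ⟨hr1, hiff'.2 h⟩
  have hinner_set : {θ : Sph (m+1) |
      (inner ℝ (θ : Euc (m+1)) (EuclideanSpace.single (0 : Fin (m+1)) (1 : ℝ)) : ℝ) ≤
        xabr (m+1) a b r} =
      {θ : Sph (m+1) | (θ : Euc (m+1)) 0 ≤ xabr (m+1) a b r} := by
    ext θ
    simp only [Set.mem_setOf_eq, inner_e1]
  constructor
  · rw [hset, hinner_set]
  · rw [profileFn, hset, sphσ_compl_toReal m hm hX0 hX1]
    have hexp : (((m+1:ℕ):ℝ) - 3)/2 = ((m:ℝ)-2)/2 := by push_cast; ring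
    rw [Psi, min_eq_left hX1.le, hexp]
    ring
end
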